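/- arXiv:1012.1389 — 7 statements merged into one kernel-verified Lean document; each statement's English description precedes it below -/
import Mathlib

section
/- Let A and B be Banach algebras with B possessing a nonzero character. If the projective tensor product A ⊗̂ B is amenable, then A is amenable. -/
open Filter Topology MulOpposite

/-- A Banach `A`-bimodule structure on the Banach space `X`:
`L a x = a • x` (left action), `R a x = x • a` (right action),
given as continuous bilinear maps. -/
structure BanachBimodule (A X : Type*) [NonUnitalNormedRing A] [NormedSpace ℂ A]
    [NormedAddCommGroup X] [NormedSpace ℂ X] where
  L : A →L[ℂ] X →L[ℂ] X
  R : A →L[ℂ] X →L[ℂ] X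
  L_mul : ∀ a b : A, L (a * b) = (L a).comp (L b)
  R_mul : ∀ a b : A, R (a * b) = (R b).comp (R a)
  LR_comm : ∀ (a b : A) (x : X), R b (L a x) = L a (R b x)

/-- `D : A → X*` is a derivation into the dual Banach bimodule of `X`, written
pointwise: `D(ab) = a·D(b) + D(a)·b` where `(a·f)(x) = f(x·a)`, `(f·a)(x) = f(a·x)`. -/
def IsDualDerivation {A X : Type*} [NonUnitalNormedRing A] [NormedSpace ℂ A]
    [NormedAddCommGroup X] [NormedSpace ℂ X] (σ : BanachBimodule A X)
    (D : A →L[ℂ] (X →L[ℂ] ℂ)) : Prop :=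
  ∀ (a b : A) (x : X), D (a * b) x = D b (σ.R a x) + D a (σ.L b x)

/-- `D` is inner: `D a = a·f − f·a` for some `f ∈ X*`. -/
def IsInnerDualDerivation {A X : Type*} [NonUnitalNormedRing A] [NormedSpace ℂ A]
    [NormedAddCommGroup X] [NormedSpace ℂ X] (σ : BanachBimodule A X)
    (D : A →L[ℂ] (X →L[ℂ] ℂ)) : Prop :=
  ∃ f : X →L[ℂ] ℂ, ∀ (a : A) (x : X), D a x = f (σ.R a x) - f (σ.L a x)

/-- A Banach algebra is amenable if every continuous derivation into every dual
Banach bimodule is inner. -/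
def Amenable (A : Type*) [NonUnitalNormedRing A] [NormedSpace ℂ A] : Prop :=
  ∀ (X : Type) (_ : NormedAddCommGroup X) (_ : NormedSpace ℂ X) (_ : CompleteSpace X)
    (σ : BanachBimodule A X) (D : A →L[ℂ] (X →L[ℂ] ℂ)),
    IsDualDerivation σ D → IsInnerDualDerivation σ D

/-- Weak amenability: every continuous derivation `D : A → A*` into the dual
bimodule (`(a·f)(x) = f(xa)`, `(f·a)(x) = f(ax)`) is inner. -/
def WeaklyAmenable (A : Type*) [NonUnitalNormedRing A] [NormedSpace ℂ A] : Prop :=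
  ∀ D : A →L[ℂ] (A →L[ℂ] ℂ),
    (∀ a b x : A, D (a * b) x = D b (x * a) + D a (b * x)) →
    ∃ f : A →L[ℂ] ℂ, ∀ a x : A, D a x = f (x * a) - f (a * x)

/-- A bounded net in a normed space. -/
structure BddNet (X : Type*) [Norm X] where
  ι : Type
  [dir : SemilatticeSup ι]
  [ne : Nonempty ι]
  z : ι → X
  C : ℝ
  bdd : ∀ i, ‖z i‖ ≤ C

/-- The `atTop` filter of the (directed) index of a bounded net. -/
def BddNet.filter {X : Type*} [Norm X] (S : BddNet X) : Filter S.ι :=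
  letI := S.dir; Filter.atTop

/-- The bounded net `S` is a two-sided bounded approximate identity for `A`. -/
def IsBAI {A : Type*} [NonUnitalNormedRing A] (S : BddNet A) : Prop :=
  ∀ a : A, Tendsto (fun i => a * S.z i) S.filter (nhds a) ∧
           Tendsto (fun i => S.z i * a) S.filter (nhds a)

/-- `A` has a (two-sided) bounded approximate identity. -/
def HasBAI (A : Type*) [NonUnitalNormedRing A] : Prop := ∃ S : BddNet A, IsBAI S

/-- `T`, together with the continuous bilinear map `ι`, is (a realization of) the
projective tensor product `A ⊗̂ B` of the Banach algebras `A` and `B`: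
`ι` is multiplicative ((a⊗b)(c⊗d) = ac⊗bd), satisfies the cross-norm estimate,
has dense linear span, and has the universal (norm-decreasing lifting) property
of the projective tensor norm. -/
structure IsProjTensorProduct (A B T : Type*)
    [NonUnitalNormedRing A] [NormedSpace ℂ A] [NonUnitalNormedRing B] [NormedSpace ℂ B]
    [NonUnitalNormedRing T] [NormedSpace ℂ T] [CompleteSpace T] where
  ι : A →L[ℂ] B →L[ℂ] T
  norm_ι : ∀ a b, ‖ι a b‖ ≤ ‖a‖ * ‖b‖
  ι_mul : ∀ (a c : A) (b d : B), ι a b * ι c d = ι (a * c) (b * d)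
  dense_span : Dense (Submodule.span ℂ (Set.range fun p : A × B => ι p.1 p.2) : Set T)
  lift : ∀ (E : Type) (_ : NormedAddCommGroup E) (_ : NormedSpace ℂ E) (_ : CompleteSpace E)
    (φ : A →L[ℂ] B →L[ℂ] E), ∃ Φ : T →L[ℂ] E, (∀ a b, Φ (ι a b) = φ a b) ∧ ‖Φ‖ ≤ ‖φ‖


/-- Auxiliary: two continuous linear maps out of a projective tensor product that agree
on elementary tensors agree everywhere. -/
theorem IsProjTensorProduct.extd {A B T : Type*}
    [NonUnitalNormedRing A] [NormedSpace ℂ A] [NonUnitalNormedRing B] [NormedSpace ℂ B]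
    [NonUnitalNormedRing T] [NormedSpace ℂ T] [CompleteSpace T]
    (P : IsProjTensorProduct A B T)
    {Y : Type*} [NormedAddCommGroup Y] [NormedSpace ℂ Y]
    {f g : T →L[ℂ] Y} (h : ∀ a b, f (P.ι a b) = g (P.ι a b)) : ∀ t, f t = g t := by
  have : f = g := ContinuousLinearMap.ext_on P.dense_span (by
    rintro _ ⟨⟨a, b⟩, rfl⟩; exact h a b)
  exact fun t => by rw [this]

set_option maxHeartbeats 1000000 in
/-- if `B` has a nonzero character and `A ⊗̂ B` is amenable,
then `A` is amenable. -/
theorem stmt1 {A B T : Type*} [NonUnitalNormedRing A] [NormedSpace ℂ A] [IsScalarTower ℂ A A] [SMulCommClass ℂ A A] [CompleteSpace A] [NonUnitalNormedRing B] [NormedSpace ℂ B] [IsScalarTower ℂ B B] [SMulCommClass ℂ B B] [CompleteSpace B] [NonUnitalNormedRing T] [NormedSpace ℂ T] [IsScalarTower ℂ T T] [SMulCommClass ℂ T T] [CompleteSpace T]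
    (P : IsProjTensorProduct A B T)
    (φ : B →L[ℂ] ℂ) (hφ_mul : ∀ b c : B, φ (b * c) = φ b * φ c) (hφ_ne : φ ≠ 0)
    (hT : Amenable T) : Amenable A := by
  classical
  obtain ⟨b', hb'⟩ : ∃ b, φ b ≠ 0 := by
    by_contra h
    push_neg at h
    exact hφ_ne (ContinuousLinearMap.ext fun b => by simp [h b])
  intro X iX1 iX2 iX3 σ D hD
  set b₀ : B := (φ b')⁻¹ • b' with hb₀def
  have hφb₀ : φ b₀ = 1 := by
    simp [hb₀def, inv_mul_cancel₀ hb']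
  -- Lift the three structure maps to `T`.
  obtain ⟨ΛL, hΛL, -⟩ := P.lift (X →L[ℂ] X) inferInstance inferInstance inferInstance
    ((ContinuousLinearMap.smulRightL ℂ B (X →L[ℂ] X) φ).comp σ.L)
  obtain ⟨ΛR, hΛR, -⟩ := P.lift (X →L[ℂ] X) inferInstance inferInstance inferInstance
    ((ContinuousLinearMap.smulRightL ℂ B (X →L[ℂ] X) φ).comp σ.R)
  obtain ⟨ΛD, hΛD, -⟩ := P.lift (X →L[ℂ] ℂ) inferInstance inferInstance inferInstance
    ((ContinuousLinearMap.smulRightL ℂ B (X →L[ℂ] ℂ) φ).comp D)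
  have hΛL' : ∀ a b, ΛL (P.ι a b) = φ b • σ.L a := fun a b => by
    have := hΛL a b; simpa [ContinuousLinearMap.smulRightL] using this
  have hΛR' : ∀ a b, ΛR (P.ι a b) = φ b • σ.R a := fun a b => by
    have := hΛR a b; simpa [ContinuousLinearMap.smulRightL] using this
  have hΛD' : ∀ a b, ΛD (P.ι a b) = φ b • D a := fun a b => by
    have := hΛD a b; simpa [ContinuousLinearMap.smulRightL] using this
  -- multiplicativity of the lifted left action
  have hLmul : ∀ t s : T, ΛL (t * s) = (ΛL t).comp (ΛL s) := by
    have step1 : ∀ (c : A) (d : B) (t : T),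
        ΛL (t * P.ι c d) = (ΛL t).comp (ΛL (P.ι c d)) := by
      intro c d t
      have h := P.extd
        (f := ΛL.comp ((ContinuousLinearMap.mul ℂ T).flip (P.ι c d)))
        (g := ((ContinuousLinearMap.compL ℂ X X X).flip (ΛL (P.ι c d))).comp ΛL)
        (fun a b => by
          ext x
          simp [P.ι_mul, hΛL', hφ_mul, σ.L_mul, mul_smul, smul_comm (φ b) (φ d)])
      simpa using h t
    intro t s
    have h := P.extd
      (f := ΛL.comp (ContinuousLinearMap.mul ℂ T t))
      (g := ((ContinuousLinearMap.compL ℂ X X X) (ΛL t)).comp ΛL)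
      (fun c d => by simpa using step1 c d t)
    simpa using h s
  -- anti-multiplicativity of the lifted right action
  have hRmul : ∀ t s : T, ΛR (t * s) = (ΛR s).comp (ΛR t) := by
    have step1 : ∀ (c : A) (d : B) (t : T),
        ΛR (t * P.ι c d) = (ΛR (P.ι c d)).comp (ΛR t) := by
      intro c d t
      have h := P.extd
        (f := ΛR.comp ((ContinuousLinearMap.mul ℂ T).flip (P.ι c d)))
        (g := ((ContinuousLinearMap.compL ℂ X X X) (ΛR (P.ι c d))).comp ΛR)
        (fun a b => by
          ext x
          simp [P.ι_mul, hΛR', hφ_mul, σ.R_mul, mul_smul, smul_comm (φ b) (φ d)])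
      simpa using h t
    intro t s
    have h := P.extd
      (f := ΛR.comp (ContinuousLinearMap.mul ℂ T t))
      (g := ((ContinuousLinearMap.compL ℂ X X X).flip (ΛR t)).comp ΛR)
      (fun c d => by simpa using step1 c d t)
    simpa using h s
  -- commutation of the lifted actions
  have hLR : ∀ t s : T, (ΛR s).comp (ΛL t) = (ΛL t).comp (ΛR s) := by
    have step1 : ∀ (a : A) (b : B) (s : T),
        (ΛR s).comp (ΛL (P.ι a b)) = (ΛL (P.ι a b)).comp (ΛR s) := by
      intro a b s
      have h := P.extd
        (f := ((ContinuousLinearMap.compL ℂ X X X).flip (ΛL (P.ι a b))).comp ΛR)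
        (g := ((ContinuousLinearMap.compL ℂ X X X) (ΛL (P.ι a b))).comp ΛR)
        (fun c d => by
          ext x
          simp [hΛL', hΛR', σ.LR_comm, smul_comm (φ d) (φ b)])
      simpa using h s
    intro t s
    have h := P.extd
      (f := ((ContinuousLinearMap.compL ℂ X X X) (ΛR s)).comp ΛL)
      (g := ((ContinuousLinearMap.compL ℂ X X X).flip (ΛR s)).comp ΛL)
      (fun a b => by simpa using step1 a b s)
    simpa using h t
  -- the lifted derivation identity
  have hDer : ∀ t s : T,
      ΛD (t * s) = (ΛD s).comp (ΛR t) + (ΛD t).comp (ΛL s) := by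
    have step1 : ∀ (a : A) (b : B) (s : T),
        ΛD (P.ι a b * s) = (ΛD s).comp (ΛR (P.ι a b)) + (ΛD (P.ι a b)).comp (ΛL s) := by
      intro a b s
      have h := P.extd
        (f := ΛD.comp (ContinuousLinearMap.mul ℂ T (P.ι a b)))
        (g := ((ContinuousLinearMap.compL ℂ X X ℂ).flip (ΛR (P.ι a b))).comp ΛD
          + ((ContinuousLinearMap.compL ℂ X X ℂ) (ΛD (P.ι a b))).comp ΛL)
        (fun c d => by
          ext x
          have hd := hD a c x
          simp [P.ι_mul, hΛD', hΛR', hΛL', hφ_mul, hd, mul_smul,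
            smul_comm (φ b) (φ d), mul_add]
          try ring)
      simpa using h s
    intro t s
    have h := P.extd
      (f := ΛD.comp ((ContinuousLinearMap.mul ℂ T).flip s))
      (g := ((ContinuousLinearMap.compL ℂ X X ℂ) (ΛD s)).comp ΛR
        + ((ContinuousLinearMap.compL ℂ X X ℂ).flip (ΛL s)).comp ΛD)
      (fun a b => by simpa using step1 a b s)
    simpa using h t
  -- assemble the `T`-bimodule and apply amenability of `T`
  let σ' : BanachBimodule T X :=
    { L := ΛL, R := ΛR, L_mul := hLmul, R_mul := hRmul,
      LR_comm := fun t s x => by rw [← ContinuousLinearMap.comp_apply, hLR t s]; rfl }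
  have hD' : IsDualDerivation σ' ΛD := by
    intro t s x
    have := hDer t s
    calc ΛD (t * s) x = ((ΛD s).comp (ΛR t) + (ΛD t).comp (ΛL s)) x := by rw [this]
      _ = ΛD s (σ'.R t x) + ΛD t (σ'.L s x) := rfl
  obtain ⟨f, hf⟩ := hT X iX1 iX2 iX3 σ' ΛD hD'
  refine ⟨f, fun a x => ?_⟩
  have h := hf (P.ι a b₀) x
  have hL0 : σ'.L (P.ι a b₀) = σ.L a := by
    show ΛL (P.ι a b₀) = σ.L a; rw [hΛL', hφb₀, one_smul]
  have hR0 : σ'.R (P.ι a b₀) = σ.R a := by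
    show ΛR (P.ι a b₀) = σ.R a; rw [hΛR', hφb₀, one_smul]
  have hD0 : ΛD (P.ι a b₀) = D a := by rw [hΛD', hφb₀, one_smul]
  rw [hD0, hR0, hL0] at h
  exact h
end

section
/- Let A be a Banach algebra such that A ⊗̂ A^{op} has a bounded approximate identity, and suppose that each of the locally convex topologies on A defined by the seminorm families ρ_a(b) = ‖ab‖ (a ∈ A) and γ_a(b) = ‖ba‖ (a ∈ A) is stronger than the weak topology on A. Then A has a two-sided bounded approximate identity. -/
open Filter Topology MulOpposite

section Mazur

variable {E : Type*} [NormedAddCommGroup E] [NormedSpace ℂ E]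

lemma dual_eq_dual {x y : E} (h : ∀ f : E →L[ℂ] ℂ, f x = f y) : x = y :=
  sub_eq_zero.mp (NormedSpace.eq_zero_of_forall_dual_eq_zero ℂ fun f => by
    rw [map_sub, h, sub_self])

lemma mazur {s : Set E} (hs : Convex ℝ s) {ι : Type*} {l : Filter ι} [l.NeBot]
    {x : ι → E} (hx : ∀ i, x i ∈ s) {y : E}
    (h : ∀ f : E →L[ℂ] ℂ, Tendsto (fun i => f (x i)) l (𝓝 (f y)))
    {ε : ℝ} (hε : 0 < ε) : ∃ w ∈ s, ‖y - w‖ < ε := by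
  have inj : Function.Injective (topDualPairing ℂ E).flip := by
    intro u v huv
    refine dual_eq_dual fun f => ?_
    have := congrFun (congrArg (fun (g : (E →L[ℂ] ℂ) →ₗ[ℂ] ℂ) => (g : (E →L[ℂ] ℂ) → ℂ)) huv) f
    exact this
  have ht : Tendsto (fun i => toWeakSpace ℂ E (x i)) l (𝓝 (toWeakSpace ℂ E y)) := by
    refine (WeakBilin.tendsto_iff_forall_eval_tendsto _ inj).mpr ?_
    exact fun f => h f
  have hcl : toWeakSpace ℂ E y ∈ closure (toWeakSpace ℂ E '' s) :=
    mem_closure_of_tendsto ht (Eventually.of_forall fun i => ⟨x i, hx i, rfl⟩)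
  rw [← hs.toWeakSpace_closure ℂ] at hcl
  obtain ⟨y', hy', hyy⟩ := hcl
  have hy : y ∈ closure s := by rwa [← (toWeakSpace ℂ E).injective hyy]
  rw [Metric.mem_closure_iff] at hy
  obtain ⟨w, hw, hd⟩ := hy ε hε
  exact ⟨w, hw, by rwa [dist_eq_norm] at hd⟩

/-- The continuous linear inclusion of a factor into a finite product. -/
noncomputable def singleCLM (κ : Type*) [Fintype κ] [DecidableEq κ]
    (E : Type*) [NormedAddCommGroup E] [NormedSpace ℂ E] (a : κ) : E →L[ℂ] (κ → E) :=
  LinearMap.mkContinuous (LinearMap.single ℂ (fun _ => E) a) 1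
    (fun v => by simp [Pi.norm_single])

@[simp] lemma singleCLM_apply {κ : Type*} [Fintype κ] [DecidableEq κ]
    {E : Type*} [NormedAddCommGroup E] [NormedSpace ℂ E] (a : κ) (v : E) :
    singleCLM κ E a v = Pi.single a v := rfl

end Mazur

section DualBound

variable {A : Type*} [NonUnitalNormedRing A] [NormedSpace ℂ A]

lemma dual_bound (p : SeminormFamily ℂ A A)
    (hle : p.moduleFilterBasis.topology ≤ TopologicalSpace.induced
      (fun (a : A) (f : A →L[ℂ] ℂ) => f a) Pi.topologicalSpace)
    (f : A →L[ℂ] ℂ) :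
    ∃ (s : Finset A) (C : NNReal), ∀ x : A, ‖f x‖ ≤ C * (s.sup p) x := by
  have h1 : @Continuous A ((A →L[ℂ] ℂ) → ℂ)
      (TopologicalSpace.induced (fun (a : A) (f : A →L[ℂ] ℂ) => f a) Pi.topologicalSpace)
      Pi.topologicalSpace (fun a g => g a) := continuous_induced_dom
  have hf' : @Continuous A ℂ
      (TopologicalSpace.induced (fun (a : A) (f : A →L[ℂ] ℂ) => f a) Pi.topologicalSpace) _ f :=
    @Continuous.comp A ((A →L[ℂ] ℂ) → ℂ) ℂ
      (TopologicalSpace.induced (fun (a : A) (f : A →L[ℂ] ℂ) => f a) Pi.topologicalSpace)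
      Pi.topologicalSpace _ (fun a g => g a) (fun p => p f) (continuous_apply f) h1
  have hfc : @Continuous A ℂ p.moduleFilterBasis.topology _ f := continuous_le_dom hle hf'
  have hq : @Continuous A ℝ p.moduleFilterBasis.topology _
      ⇑((normSeminorm ℂ ℂ).comp (f : A →ₗ[ℂ] ℂ)) := by
    show @Continuous A ℝ p.moduleFilterBasis.topology _ fun x => ‖f x‖
    exact @Continuous.comp A ℂ ℝ p.moduleFilterBasis.topology _ _ _ _
      continuous_norm hfc
  have hp := @WithSeminorms.mk ℂ A A _ _ _ p p.moduleFilterBasis.topology rfl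
  obtain ⟨s, C, _, hC⟩ := @Seminorm.bound_of_continuous ℂ A A _ _ _ p
    p.moduleFilterBasis.topology hp ((normSeminorm ℂ ℂ).comp (f : A →ₗ[ℂ] ℂ)) hq
  refine ⟨s, C, fun x => ?_⟩
  have := hC x
  simpa [NNReal.smul_def, smul_eq_mul] using this

end DualBound

section Pi

variable {A T : Type*} [NonUnitalNormedRing A] [NormedSpace ℂ A] [IsScalarTower ℂ A A]
  [SMulCommClass ℂ A A] [CompleteSpace A] [NonUnitalNormedRing T] [NormedSpace ℂ T]
  [IsScalarTower ℂ T T] [SMulCommClass ℂ T T] [CompleteSpace T]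

/-- The bilinear map `(a, b) ↦ f (a * unop b)`. -/
noncomputable def phiAux (f : A →L[ℂ] ℂ) : A →L[ℂ] Aᵐᵒᵖ →L[ℂ] ℂ :=
  LinearMap.mkContinuous₂
    (LinearMap.mk₂ ℂ (fun a b => f (a * unop b))
      (fun a a' b => by simp [add_mul])
      (fun c a b => by simp [smul_mul_assoc])
      (fun a b b' => by simp [mul_add])
      (fun c a b => by simp [mul_smul_comm]))
    ‖f‖ (fun a b => by
      calc ‖f (a * unop b)‖ ≤ ‖f‖ * ‖a * unop b‖ := f.le_opNorm _
        _ ≤ ‖f‖ * (‖a‖ * ‖unop b‖) := by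
            exact mul_le_mul_of_nonneg_left (norm_mul_le _ _) (norm_nonneg f)
        _ = ‖f‖ * ‖a‖ * ‖b‖ := by rw [norm_unop]; ring)

lemma phiAux_apply (f : A →L[ℂ] ℂ) (a : A) (b : Aᵐᵒᵖ) : phiAux f a b = f (a * unop b) := rfl

lemma phiAux_norm (f : A →L[ℂ] ℂ) : ‖phiAux (A := A) f‖ ≤ ‖f‖ :=
  LinearMap.mkContinuous₂_norm_le _ (norm_nonneg f) _

variable (P : IsProjTensorProduct A Aᵐᵒᵖ T)

/-- A lift of `phiAux f` to `T`. -/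
noncomputable def PhiT (f : A →L[ℂ] ℂ) : T →L[ℂ] ℂ :=
  (P.lift ℂ inferInstance inferInstance inferInstance (phiAux f)).choose

lemma PhiT_spec (f : A →L[ℂ] ℂ) :
    (∀ a b, PhiT P f (P.ι a b) = f (a * unop b)) ∧ ‖PhiT P f‖ ≤ ‖phiAux (A := A) f‖ :=
  (P.lift ℂ inferInstance inferInstance inferInstance (phiAux f)).choose_spec

lemma PhiT_apply (f : A →L[ℂ] ℂ) (a : A) (b : Aᵐᵒᵖ) : PhiT P f (P.ι a b) = f (a * unop b) :=
  (PhiT_spec P f).1 a b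

lemma PhiT_bound (f : A →L[ℂ] ℂ) (u : T) : ‖PhiT P f u‖ ≤ ‖f‖ * ‖u‖ :=
  le_trans ((PhiT P f).le_opNorm u)
    (mul_le_mul_of_nonneg_right (le_trans (PhiT_spec P f).2 (phiAux_norm f)) (norm_nonneg u))

/-- Uniqueness of continuous linear functionals on `T` agreeing on elementary tensors. -/
lemma T_ext {Φ₁ Φ₂ : T →L[ℂ] ℂ} (h : ∀ a b, Φ₁ (P.ι a b) = Φ₂ (P.ι a b)) : Φ₁ = Φ₂ :=
  ContinuousLinearMap.ext_on P.dense_span (by rintro _ ⟨⟨a, b⟩, rfl⟩; exact h a b)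

lemma exists_pi : ∀ u : T, ∃ x : A, ∀ f : A →L[ℂ] ℂ, f x = PhiT P f u := by
  set V : Set T := {u | ∃ x : A, ∀ f : A →L[ℂ] ℂ, f x = PhiT P f u} with hV
  have hgen : ∀ p : A × Aᵐᵒᵖ, P.ι p.1 p.2 ∈ V :=
    fun p => ⟨p.1 * unop p.2, fun f => (PhiT_apply P f p.1 p.2).symm⟩
  have hzero : (0 : T) ∈ V := ⟨0, fun f => by simp⟩
  have hadd : ∀ u v : T, u ∈ V → v ∈ V → u + v ∈ V := by
    rintro u v ⟨x, hx⟩ ⟨y, hy⟩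
    exact ⟨x + y, fun f => by rw [map_add, hx, hy, map_add]⟩
  have hsmul : ∀ (c : ℂ) (u : T), u ∈ V → c • u ∈ V := by
    rintro c u ⟨x, hx⟩
    exact ⟨c • x, fun f => by rw [map_smul, hx, map_smul]⟩
  have hclosed : IsClosed V := by
    apply IsSeqClosed.isClosed
    intro u un hmem hlim
    -- `u` is the sequence, `un` the limit point
    choose w hw using hmem
    have key : ∀ m n : ℕ, ‖w m - w n‖ ≤ ‖u m - u n‖ := by
      intro m n
      refine NormedSpace.norm_le_dual_bound ℂ _ (norm_nonneg _) fun f => ?_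
      rw [map_sub, hw, hw, ← map_sub]
      calc ‖PhiT P f (u m - u n)‖ ≤ ‖f‖ * ‖u m - u n‖ := PhiT_bound P f _
        _ = ‖u m - u n‖ * ‖f‖ := mul_comm _ _
    have hcau : CauchySeq w := by
      have hcu : CauchySeq u := hlim.cauchySeq
      rw [Metric.cauchySeq_iff] at hcu ⊢
      intro ε hε
      obtain ⟨N, hN⟩ := hcu ε hε
      refine ⟨N, fun m hm n hn => ?_⟩
      rw [dist_eq_norm]
      exact lt_of_le_of_lt (key m n) (by rw [← dist_eq_norm]; exact hN m hm n hn)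
    obtain ⟨x, hx⟩ := cauchySeq_tendsto_of_complete hcau
    refine ⟨x, fun f => ?_⟩
    have h1 : Tendsto (fun n => f (w n)) atTop (𝓝 (f x)) := (f.continuous.tendsto x).comp hx
    have h2 : Tendsto (fun n => PhiT P f (u n)) atTop (𝓝 (PhiT P f un)) :=
      ((PhiT P f).continuous.tendsto un).comp hlim
    have : (fun n => f (w n)) = fun n => PhiT P f (u n) := funext fun n => hw n f
    rw [this] at h1
    exact tendsto_nhds_unique h1 h2
  intro u
  have huniv : (Submodule.span ℂ (Set.range fun p : A × Aᵐᵒᵖ => P.ι p.1 p.2) : Set T) ⊆ V := by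
    intro v hv
    refine Submodule.span_induction ?_ hzero (fun a b _ _ ha hb => hadd a b ha hb)
      (fun c a _ ha => hsmul c a ha) hv
    rintro _ ⟨p, rfl⟩; exact hgen p
  have : u ∈ closure (Submodule.span ℂ (Set.range fun p : A × Aᵐᵒᵖ => P.ι p.1 p.2) : Set T) :=
    P.dense_span u
  exact hclosed.closure_subset ((closure_mono huniv) this)

end Pi

set_option maxHeartbeats 1600000 in
/-- if `A ⊗̂ Aᵒᵖ` has a bounded approximate identity and both the
topology of the seminorms `ρ_a(b) = ‖ab‖` and that of `γ_a(b) = ‖ba‖` are stronger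
(finer) than the weak topology on `A`, then `A` has a two-sided bounded approximate
identity. -/
theorem stmt4 {A T : Type*} [NonUnitalNormedRing A] [NormedSpace ℂ A] [IsScalarTower ℂ A A] [SMulCommClass ℂ A A] [CompleteSpace A] [NonUnitalNormedRing T] [NormedSpace ℂ T] [IsScalarTower ℂ T T] [SMulCommClass ℂ T T] [CompleteSpace T]
    (P : IsProjTensorProduct A Aᵐᵒᵖ T) (hT : HasBAI T)
    (hρ : (SeminormFamily.moduleFilterBasis
        ((fun a : A => (normSeminorm ℂ A).comp (LinearMap.mulLeft ℂ a)) : SeminormFamily ℂ A A)).topology ≤ TopologicalSpace.induced (fun (a : A) (f : A →L[ℂ] ℂ) => f a) Pi.topologicalSpace)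
    (hγ : (SeminormFamily.moduleFilterBasis
        ((fun a : A => (normSeminorm ℂ A).comp (LinearMap.mulRight ℂ a)) : SeminormFamily ℂ A A)).topology ≤ TopologicalSpace.induced (fun (a : A) (f : A →L[ℂ] ℂ) => f a) Pi.topologicalSpace) :
    HasBAI A := by
  classical
  obtain ⟨S, hS⟩ := hT
  letI : SemilatticeSup S.ι := S.dir
  letI : Nonempty S.ι := S.ne
  haveI : S.filter.NeBot := (atTop_neBot : (atTop : Filter S.ι).NeBot)
  choose piT hpiT using exists_pi P
  have pi_zero : piT 0 = 0 := dual_eq_dual fun f => by rw [hpiT, map_zero, map_zero]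
  have pi_sub_norm : ∀ u v : T, ‖piT u - piT v‖ ≤ ‖u - v‖ := fun u v =>
    NormedSpace.norm_le_dual_bound ℂ _ (norm_nonneg _) fun f => by
      rw [map_sub, hpiT, hpiT, ← map_sub]
      exact (PhiT_bound P f _).trans_eq (mul_comm _ _)
  have pi_gen : ∀ (a : A) (b : Aᵐᵒᵖ), piT (P.ι a b) = a * unop b :=
    fun a b => dual_eq_dual fun f => by rw [hpiT, PhiT_apply]
  set z : S.ι → A := fun i => piT (S.z i) with hzdef
  have z_bdd : ∀ i, ‖z i‖ ≤ max S.C 0 := by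
    intro i
    have h1 : ‖piT (S.z i) - piT 0‖ ≤ ‖S.z i - 0‖ := pi_sub_norm _ _
    rw [pi_zero, sub_zero, sub_zero] at h1
    exact le_trans h1 (le_trans (S.bdd i) (le_max_left _ _))
  -- the key algebraic identity
  have key0 : ∀ (a b : A) (u : T), a * piT u * b = piT (P.ι a (op b) * u) := by
    intro a b u
    apply dual_eq_dual; intro f
    let Lc : A →L[ℂ] A := ContinuousLinearMap.mul ℂ A a
    let Rc : A →L[ℂ] A := (ContinuousLinearMap.mul ℂ A).flip b
    let g : A →L[ℂ] ℂ := f.comp (Rc.comp Lc)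
    let Mv : T →L[ℂ] T := ContinuousLinearMap.mul ℂ T (P.ι a (op b))
    have hext : PhiT P g = (PhiT P f).comp Mv := by
      apply T_ext P
      intro c d
      have h1 : PhiT P g (P.ι c d) = f (a * (c * unop d) * b) := PhiT_apply P g c d
      have h2 : (PhiT P f).comp Mv (P.ι c d) = f (a * c * unop (op b * d)) := by
        show PhiT P f (P.ι a (op b) * P.ι c d) = _
        rw [P.ι_mul, PhiT_apply]
      rw [h1, h2]
      congr 1
      rw [unop_mul, unop_op]
      simp [mul_assoc]
    have lhs : f (a * piT u * b) = PhiT P g u := hpiT u g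
    have rhs : f (piT (P.ι a (op b) * u)) = PhiT P f (P.ι a (op b) * u) := hpiT _ f
    rw [lhs, rhs, hext]
    rfl
  -- norm convergence of a * z i * b
  have key2 : ∀ a b : A, Tendsto (fun i => a * z i * b) S.filter (𝓝 (a * b)) := by
    intro a b
    have h1 : Tendsto (fun i => P.ι a (op b) * S.z i) S.filter (𝓝 (P.ι a (op b))) :=
      (hS (P.ι a (op b))).1
    have h2 : Tendsto (fun i => ‖P.ι a (op b) * S.z i - P.ι a (op b)‖) S.filter (𝓝 0) :=
      tendsto_iff_norm_sub_tendsto_zero.mp h1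
    rw [tendsto_iff_norm_sub_tendsto_zero]
    refine squeeze_zero (fun i => norm_nonneg _) (fun i => ?_) h2
    have e1 : a * z i * b = piT (P.ι a (op b) * S.z i) := key0 a b (S.z i)
    have e2 : a * b = piT (P.ι a (op b)) := by rw [pi_gen, unop_op]
    rw [e1, e2]
    exact pi_sub_norm _ _
  -- weak convergence on the right
  have wR : ∀ (f : A →L[ℂ] ℂ) (b : A),
      Tendsto (fun i => f (z i * b)) S.filter (𝓝 (f b)) := by
    intro f b
    obtain ⟨s, C, hC⟩ := dual_bound
      ((fun a : A => (normSeminorm ℂ A).comp (LinearMap.mulLeft ℂ a)) : SeminormFamily ℂ A A)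
      hρ f
    set p : SeminormFamily ℂ A A :=
      fun a : A => (normSeminorm ℂ A).comp (LinearMap.mulLeft ℂ a) with hpdef
    have hsup : Tendsto (fun i => (s.sup p) (z i * b - b)) S.filter (𝓝 0) := by
      rw [Metric.tendsto_nhds]
      intro ε hε
      have hev : ∀ a ∈ s, ∀ᶠ i in S.filter, p a (z i * b - b) < ε := by
        intro a _
        have hk : Tendsto (fun i => ‖a * z i * b - a * b‖) S.filter (𝓝 0) :=
          tendsto_iff_norm_sub_tendsto_zero.mp (key2 a b)
        refine (hk.eventually (gt_mem_nhds hε)).mono fun i hi => ?_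
        have hpe : p a (z i * b - b) = ‖a * z i * b - a * b‖ := by
          show ‖a * (z i * b - b)‖ = _
          rw [mul_sub, ← mul_assoc]
        rw [hpe]; exact hi
      refine ((Filter.eventually_all_finset s).mpr hev).mono fun i hi => ?_
      rw [Real.dist_eq, sub_zero, abs_of_nonneg (apply_nonneg _ _)]
      exact Seminorm.finset_sup_apply_lt hε hi
    rw [tendsto_iff_norm_sub_tendsto_zero]
    refine squeeze_zero (fun i => norm_nonneg _) (fun i => ?_)
      (by simpa using hsup.const_mul (C : ℝ))
    rw [← map_sub]
    exact hC _
  -- weak convergence on the left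
  have wL : ∀ (f : A →L[ℂ] ℂ) (b : A),
      Tendsto (fun i => f (b * z i)) S.filter (𝓝 (f b)) := by
    intro f b
    obtain ⟨s, C, hC⟩ := dual_bound
      ((fun a : A => (normSeminorm ℂ A).comp (LinearMap.mulRight ℂ a)) : SeminormFamily ℂ A A)
      hγ f
    set p : SeminormFamily ℂ A A :=
      fun a : A => (normSeminorm ℂ A).comp (LinearMap.mulRight ℂ a) with hpdef
    have hsup : Tendsto (fun i => (s.sup p) (b * z i - b)) S.filter (𝓝 0) := by
      rw [Metric.tendsto_nhds]
      intro ε hε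
      have hev : ∀ a ∈ s, ∀ᶠ i in S.filter, p a (b * z i - b) < ε := by
        intro a _
        have hk : Tendsto (fun i => ‖b * z i * a - b * a‖) S.filter (𝓝 0) :=
          tendsto_iff_norm_sub_tendsto_zero.mp (key2 b a)
        refine (hk.eventually (gt_mem_nhds hε)).mono fun i hi => ?_
        have hpe : p a (b * z i - b) = ‖b * z i * a - b * a‖ := by
          show ‖(b * z i - b) * a‖ = _
          rw [sub_mul]
        rw [hpe]; exact hi
      refine ((Filter.eventually_all_finset s).mpr hev).mono fun i hi => ?_
      rw [Real.dist_eq, sub_zero, abs_of_nonneg (apply_nonneg _ _)]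
      exact Seminorm.finset_sup_apply_lt hε hi
    rw [tendsto_iff_norm_sub_tendsto_zero]
    refine squeeze_zero (fun i => norm_nonneg _) (fun i => ?_)
      (by simpa using hsup.const_mul (C : ℝ))
    rw [← map_sub]
    exact hC _
  -- the convex hull of the net
  set K : Set A := convexHull ℝ (Set.range z) with hKdef
  have hKc : Convex ℝ K := convex_convexHull ℝ _
  have hKb : ∀ w ∈ K, ‖w‖ ≤ max S.C 0 := by
    intro w hw
    have hsub : K ⊆ Metric.closedBall 0 (max S.C 0) := by
      apply convexHull_min ?_ (convex_closedBall 0 (max S.C 0))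
      rintro x ⟨i, rfl⟩
      rw [Metric.mem_closedBall, dist_zero_right]
      exact z_bdd i
    have := hsub hw
    rwa [Metric.mem_closedBall, dist_zero_right] at this
  -- the finite Mazur step
  have step : ∀ (F : Finset A) (ε : ℝ), 0 < ε →
      ∃ w ∈ K, ∀ a ∈ F, ‖a * w - a‖ < ε ∧ ‖w * a - a‖ < ε := by
    intro F ε hε
    set Ψ : A → ((F → A) × (F → A)) :=
      fun w => (fun a => (a : A) * w - a, fun a => w * (a : A) - a) with hΨdef
    have hΨaff : ∀ (sc tc : ℝ), sc + tc = 1 → ∀ u v : A,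
        sc • Ψ u + tc • Ψ v = Ψ (sc • u + tc • v) := by
      intro sc tc hst u v
      apply Prod.ext
      · funext a
        show sc • ((a : A) * u - a) + tc • ((a : A) * v - a) = (a : A) * (sc • u + tc • v) - a
        have h2 : (a : A) * (sc • u + tc • v) - a
            = sc • ((a : A) * u) + tc • ((a : A) * v) - (sc + tc) • (a : A) := by
          rw [hst, one_smul, mul_add, mul_smul_comm, mul_smul_comm]
        rw [h2, add_smul, smul_sub, smul_sub]; abel
      · funext a
        show sc • (u * (a : A) - a) + tc • (v * (a : A) - a) = (sc • u + tc • v) * (a : A) - a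
        have h2 : (sc • u + tc • v) * (a : A) - a
            = sc • (u * (a : A)) + tc • (v * (a : A)) - (sc + tc) • (a : A) := by
          rw [hst, one_smul, add_mul, smul_mul_assoc, smul_mul_assoc]
        rw [h2, add_smul, smul_sub, smul_sub]; abel
    have hconv : Convex ℝ (Ψ '' K) := by
      rintro _ ⟨u, hu, rfl⟩ _ ⟨v, hv, rfl⟩ sc tc hsc htc hst
      exact ⟨sc • u + tc • v, hKc hu hv hsc htc hst, (hΨaff sc tc hst u v).symm⟩
    have hmem : ∀ i, Ψ (z i) ∈ Ψ '' K :=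
      fun i => ⟨z i, subset_convexHull ℝ _ ⟨i, rfl⟩, rfl⟩
    have htd : ∀ g : ((F → A) × (F → A)) →L[ℂ] ℂ,
        Tendsto (fun i => g (Ψ (z i))) S.filter (𝓝 (g 0)) := by
      intro g
      rw [map_zero]
      have hdec : ∀ x : (F → A) × (F → A),
          g x = (∑ a : F, g ((ContinuousLinearMap.inl ℂ (F → A) (F → A))
                  ((singleCLM F A a) (x.1 a))))
              + ∑ a : F, g ((ContinuousLinearMap.inr ℂ (F → A) (F → A))
                  ((singleCLM F A a) (x.2 a))) := by
        intro x
        have e1 : (∑ a : F, g ((ContinuousLinearMap.inl ℂ (F → A) (F → A))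
              ((singleCLM F A a) (x.1 a))))
            = g (∑ a : F, (ContinuousLinearMap.inl ℂ (F → A) (F → A))
              ((singleCLM F A a) (x.1 a))) := (map_sum g _ Finset.univ).symm
        have e2 : (∑ a : F, g ((ContinuousLinearMap.inr ℂ (F → A) (F → A))
              ((singleCLM F A a) (x.2 a))))
            = g (∑ a : F, (ContinuousLinearMap.inr ℂ (F → A) (F → A))
              ((singleCLM F A a) (x.2 a))) := (map_sum g _ Finset.univ).symm
        rw [e1, e2, ← map_add]
        congr 1
        apply Prod.ext
        · simp only [Prod.fst_sum, Prod.fst_add, ContinuousLinearMap.inl_apply,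
            ContinuousLinearMap.inr_apply, singleCLM_apply, Prod.snd_sum, Prod.snd_add,
            Finset.sum_const_zero, add_zero, zero_add]
          exact (Finset.univ_sum_single x.1).symm
        · simp only [Prod.fst_sum, Prod.fst_add, ContinuousLinearMap.inl_apply,
            ContinuousLinearMap.inr_apply, singleCLM_apply, Prod.snd_sum, Prod.snd_add,
            Finset.sum_const_zero, add_zero, zero_add]
          exact (Finset.univ_sum_single x.2).symm
      have hre : (fun i => g (Ψ (z i))) =
          fun i => (∑ a : F, g ((ContinuousLinearMap.inl ℂ (F → A) (F → A))
                  ((singleCLM F A a) ((a : A) * z i - a))))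
              + ∑ a : F, g ((ContinuousLinearMap.inr ℂ (F → A) (F → A))
                  ((singleCLM F A a) (z i * (a : A) - a))) :=
        funext fun i => hdec (Ψ (z i))
      rw [hre]
      have h0 : (0 : ℂ) = 0 + 0 := by ring
      rw [h0]
      refine Tendsto.add ?_ ?_
      · have : (0 : ℂ) = ∑ _a : F, (0 : ℂ) := by simp
        rw [this]
        refine tendsto_finset_sum _ fun a _ => ?_
        set h : A →L[ℂ] ℂ :=
          g.comp ((ContinuousLinearMap.inl ℂ (F → A) (F → A)).comp (singleCLM F A a)) with hh
        have hfun : (fun i => g ((ContinuousLinearMap.inl ℂ (F → A) (F → A))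
            ((singleCLM F A a) ((a : A) * z i - a)))) = fun i => h ((a : A) * z i) - h a := by
          funext i
          show h ((a : A) * z i - a) = _
          rw [map_sub]
        rw [hfun]
        have := (wL h (a : A)).sub_const (h (a : A))
        simpa using this
      · have : (0 : ℂ) = ∑ _a : F, (0 : ℂ) := by simp
        rw [this]
        refine tendsto_finset_sum _ fun a _ => ?_
        set h : A →L[ℂ] ℂ :=
          g.comp ((ContinuousLinearMap.inr ℂ (F → A) (F → A)).comp (singleCLM F A a)) with hh
        have hfun : (fun i => g ((ContinuousLinearMap.inr ℂ (F → A) (F → A))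
            ((singleCLM F A a) (z i * (a : A) - a)))) = fun i => h (z i * (a : A)) - h a := by
          funext i
          show h (z i * (a : A) - a) = _
          rw [map_sub]
        rw [hfun]
        have := (wR h (a : A)).sub_const (h (a : A))
        simpa using this
    obtain ⟨w', ⟨w, hwK, rfl⟩, hn⟩ := mazur hconv hmem htd hε
    rw [zero_sub, norm_neg] at hn
    refine ⟨w, hwK, fun a ha => ?_⟩
    constructor
    · calc ‖a * w - a‖ = ‖(Ψ w).1 ⟨a, ha⟩‖ := rfl
        _ ≤ ‖(Ψ w).1‖ := norm_le_pi_norm _ _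
        _ ≤ ‖Ψ w‖ := norm_fst_le _
        _ < ε := hn
    · calc ‖w * a - a‖ = ‖(Ψ w).2 ⟨a, ha⟩‖ := rfl
        _ ≤ ‖(Ψ w).2‖ := norm_le_pi_norm _ _
        _ ≤ ‖Ψ w‖ := norm_snd_le _
        _ < ε := hn
  -- final assembly of the bounded approximate identity
  have hCK0 : (0 : ℝ) ≤ max S.C 0 := le_max_right _ _
  choose e heK hespec using fun (J : Finset S.ι) (n : ℕ) =>
    step (J.image z) (1 / (n + 1)) (by positivity)
  refine ⟨⟨Finset S.ι × ℕ, (fun p => e p.1 p.2), max S.C 0,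
    fun p => hKb _ (heK p.1 p.2)⟩, ?_⟩
  intro a
  have main : ∀ ε : ℝ, 0 < ε → ∀ᶠ p : Finset S.ι × ℕ in atTop,
      ‖a * e p.1 p.2 - a‖ < ε ∧ ‖e p.1 p.2 * a - a‖ < ε := by
    intro ε hε
    set CK : ℝ := max S.C 0 with hCKdef
    set δ : ℝ := ε / (2 * (CK + 2)) with hδdef
    have hCK2 : (0 : ℝ) < CK + 2 := by nlinarith [hCK0]
    have hδ0 : 0 < δ := by positivity
    obtain ⟨w, hwK, hw⟩ := step {a} δ hδ0
    have hwa := hw a (Finset.mem_singleton_self a)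
    have hwK' := hwK
    rw [hKdef, convexHull_eq] at hwK'
    obtain ⟨ι', t, c, y, hc0, hc1, hyr, hwsum⟩ := hwK'
    choose jf hjf using hyr
    set J₀ : Finset S.ι := t.attach.image (fun i => jf i.1 i.2) with hJ₀
    obtain ⟨N, hN⟩ := exists_nat_gt (2 * (‖a‖ + 1) / ε)
    filter_upwards [Filter.eventually_ge_atTop (J₀, N)] with p hp
    have hEK : ‖e p.1 p.2‖ ≤ CK := hKb _ (heK p.1 p.2)
    have hp21 : (0 : ℝ) < (p.2 : ℝ) + 1 := by positivity
    have hEz : ∀ i ∈ t, ‖y i * e p.1 p.2 - y i‖ < 1 / (p.2 + 1) ∧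
        ‖e p.1 p.2 * y i - y i‖ < 1 / (p.2 + 1) := by
      intro i hi
      have hmem : y i ∈ p.1.image z := by
        rw [Finset.mem_image]
        refine ⟨jf i hi, hp.1 ?_, hjf i hi⟩
        rw [hJ₀, Finset.mem_image]
        exact ⟨⟨i, hi⟩, Finset.mem_attach _ _, rfl⟩
      exact hespec p.1 p.2 _ hmem
    have hwe : w = ∑ i ∈ t, c i • y i := by
      rw [← hwsum, Finset.centerMass_eq_of_sum_1 _ _ hc1]
    -- bound on the convex combination terms
    have sumboundR : ‖w * e p.1 p.2 - w‖ ≤ 1 / (p.2 + 1) := by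
      have hdist : w * e p.1 p.2 - w = ∑ i ∈ t, c i • (y i * e p.1 p.2 - y i) := by
        rw [hwe, Finset.sum_mul, ← Finset.sum_sub_distrib]
        congr 1; funext i
        rw [smul_mul_assoc, ← smul_sub]
      rw [hdist]
      calc ‖∑ i ∈ t, c i • (y i * e p.1 p.2 - y i)‖
          ≤ ∑ i ∈ t, ‖c i • (y i * e p.1 p.2 - y i)‖ := norm_sum_le _ _
        _ ≤ ∑ i ∈ t, c i * (1 / (p.2 + 1)) := by
            refine Finset.sum_le_sum fun i hi => ?_
            rw [norm_smul, Real.norm_eq_abs, abs_of_nonneg (hc0 i hi)]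
            exact mul_le_mul_of_nonneg_left (le_of_lt (hEz i hi).1) (hc0 i hi)
        _ = 1 / (p.2 + 1) := by rw [← Finset.sum_mul, hc1, one_mul]
    have sumboundL : ‖e p.1 p.2 * w - w‖ ≤ 1 / (p.2 + 1) := by
      have hdist : e p.1 p.2 * w - w = ∑ i ∈ t, c i • (e p.1 p.2 * y i - y i) := by
        rw [hwe, Finset.mul_sum, ← Finset.sum_sub_distrib]
        congr 1; funext i
        rw [mul_smul_comm, ← smul_sub]
      rw [hdist]
      calc ‖∑ i ∈ t, c i • (e p.1 p.2 * y i - y i)‖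
          ≤ ∑ i ∈ t, ‖c i • (e p.1 p.2 * y i - y i)‖ := norm_sum_le _ _
        _ ≤ ∑ i ∈ t, c i * (1 / (p.2 + 1)) := by
            refine Finset.sum_le_sum fun i hi => ?_
            rw [norm_smul, Real.norm_eq_abs, abs_of_nonneg (hc0 i hi)]
            exact mul_le_mul_of_nonneg_left (le_of_lt (hEz i hi).2) (hc0 i hi)
        _ = 1 / (p.2 + 1) := by rw [← Finset.sum_mul, hc1, one_mul]
    -- numeric bounds
    have t2bound : ‖a‖ * (1 / (p.2 + 1)) ≤ ε / 2 := by
      have h1 : 2 * (‖a‖ + 1) / ε < ((N : ℝ)) := hN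
      have h2 : ((N : ℝ)) ≤ p.2 := Nat.cast_le.mpr hp.2
      have h3 : 2 * (‖a‖ + 1) < ε * ((p.2 : ℝ) + 1) := by
        rw [div_lt_iff₀ hε] at h1
        have h4 : ((N : ℝ)) * ε ≤ ((p.2 : ℝ)) * ε := mul_le_mul_of_nonneg_right h2 hε.le
        have h5 : ε * ((p.2 : ℝ) + 1) = ((p.2 : ℝ)) * ε + ε := by ring
        linarith
      rw [mul_one_div, div_le_div_iff₀ hp21 (by norm_num : (0:ℝ) < 2)]
      have h6 : ‖a‖ * 2 ≤ 2 * (‖a‖ + 1) := by linarith [norm_nonneg a]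
      linarith
    have hδhalf : δ * (CK + 2) = ε / 2 := by
      rw [hδdef]; field_simp
    have hδsum : δ * CK + δ < ε / 2 := by
      have hre : δ * CK + δ = δ * (CK + 2) - δ := by ring
      rw [hre, hδhalf]; linarith
    constructor
    · -- ‖a * e - a‖ < ε
      have decomp : a * e p.1 p.2 - a
          = (a - a * w) * e p.1 p.2 + a * (w * e p.1 p.2 - w) + (a * w - a) := by
        rw [sub_mul, mul_sub, ← mul_assoc]
        abel
      rw [decomp]
      have hb1 : ‖(a - a * w) * e p.1 p.2‖ ≤ δ * CK := by
        refine le_trans (norm_mul_le _ _) ?_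
        refine mul_le_mul ?_ hEK (norm_nonneg _) (le_of_lt hδ0)
        rw [norm_sub_rev]; exact le_of_lt hwa.1
      have hb2 : ‖a * (w * e p.1 p.2 - w)‖ ≤ ‖a‖ * (1 / (p.2 + 1)) := by
        refine le_trans (norm_mul_le _ _) ?_
        exact mul_le_mul_of_nonneg_left sumboundR (norm_nonneg a)
      calc ‖(a - a * w) * e p.1 p.2 + a * (w * e p.1 p.2 - w) + (a * w - a)‖
          ≤ ‖(a - a * w) * e p.1 p.2‖ + ‖a * (w * e p.1 p.2 - w)‖ + ‖a * w - a‖ :=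
            norm_add₃_le
        _ < δ * CK + ε / 2 + δ := by
            have := hwa.1
            have := le_trans hb2 t2bound
            linarith [hb1, hb2, t2bound, hwa.1]
        _ < ε := by linarith [hδsum]
    · -- ‖e * a - a‖ < ε
      have decomp : e p.1 p.2 * a - a
          = e p.1 p.2 * (a - w * a) + (e p.1 p.2 * w - w) * a + (w * a - a) := by
        rw [mul_sub, sub_mul, mul_assoc]
        abel
      rw [decomp]
      have hb1 : ‖e p.1 p.2 * (a - w * a)‖ ≤ CK * δ := by
        refine le_trans (norm_mul_le _ _) ?_
        refine mul_le_mul hEK ?_ (norm_nonneg _) hCK0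
        rw [norm_sub_rev]; exact le_of_lt hwa.2
      have hb2 : ‖(e p.1 p.2 * w - w) * a‖ ≤ (1 / (p.2 + 1)) * ‖a‖ := by
        refine le_trans (norm_mul_le _ _) ?_
        exact mul_le_mul_of_nonneg_right sumboundL (norm_nonneg a)
      calc ‖e p.1 p.2 * (a - w * a) + (e p.1 p.2 * w - w) * a + (w * a - a)‖
          ≤ ‖e p.1 p.2 * (a - w * a)‖ + ‖(e p.1 p.2 * w - w) * a‖ + ‖w * a - a‖ :=
            norm_add₃_le
        _ < CK * δ + ε / 2 + δ := by
            have h4 : (1 / ((p.2 : ℝ) + 1)) * ‖a‖ ≤ ε / 2 := by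
              rw [mul_comm]; exact t2bound
            linarith [hb1, hb2, hwa.2]
        _ < ε := by
            have : CK * δ = δ * CK := mul_comm _ _
            linarith [hδsum]
  constructor
  · show Tendsto (fun p : Finset S.ι × ℕ => a * e p.1 p.2) atTop (𝓝 a)
    rw [Metric.tendsto_nhds]
    intro ε hε
    exact (main ε hε).mono fun p hp => by rw [dist_eq_norm]; exact hp.1
  · show Tendsto (fun p : Finset S.ι × ℕ => e p.1 p.2 * a) atTop (𝓝 a)
    rw [Metric.tendsto_nhds]
    intro ε hε
    exact (main ε hε).mono fun p hp => by rw [dist_eq_norm]; exact hp.2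
end

section
/- Let A be a Banach algebra with a bounded approximate identity (e_i), and let X be a neo-unital Banach A ⊗̂ A^{op}-bimodule with action •. Then the formulas (a ⊗ b) ∘ x = lim_i (a ⊗ e_i) • x • (e_i ⊗ b) and x ∘ (a ⊗ b) = lim_i (e_i ⊗ b) • x • (a ⊗ e_i) define well-defined limits and make X into a Banach A ⊗̂ A-bimodule. -/
open Filter Topology MulOpposite

section NetLimit

variable {ι : Type} [SemilatticeSup ι] [Nonempty ι]
variable {E F : Type*} [NormedAddCommGroup E] [NormedSpace ℂ E]
  [NormedAddCommGroup F] [NormedSpace ℂ F] [CompleteSpace F]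

theorem netLimit (M : ι → E →L[ℂ] F) (K : ℝ) (hK : ∀ i, ‖M i‖ ≤ K)
    (D : Set E) (hdense : Dense (Submodule.span ℂ D : Set E))
    (hconv : ∀ s ∈ D, ∃ y, Tendsto (fun i => M i s) atTop (nhds y)) :
    ∃ Λ : E →L[ℂ] F, ‖Λ‖ ≤ max K 0 ∧ ∀ t, Tendsto (fun i => M i t) atTop (nhds (Λ t)) := by
  have hK0 : ∀ i, ‖M i‖ ≤ max K 0 := fun i => le_trans (hK i) (le_max_left _ _)
  set K0 := max K 0 with hK0def
  have hK0nn : 0 ≤ K0 := le_max_right _ _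
  -- convergence on the span
  have hconv' : ∀ s ∈ Submodule.span ℂ D, ∃ y, Tendsto (fun i => M i s) atTop (nhds y) := by
    intro s hs
    induction hs using Submodule.span_induction with
    | mem s hm => exact hconv s hm
    | zero => exact ⟨0, by simpa using tendsto_const_nhds⟩
    | add u v _ _ hu hv =>
      obtain ⟨y, hy⟩ := hu; obtain ⟨z, hz⟩ := hv
      exact ⟨y + z, by simpa using hy.add hz⟩
    | smul c u _ hu =>
      obtain ⟨y, hy⟩ := hu
      exact ⟨c • y, by simpa using hy.const_smul c⟩
  -- convergence everywhere via Cauchy criterion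
  have hall : ∀ t : E, ∃ y, Tendsto (fun i => M i t) atTop (nhds y) := by
    intro t
    apply cauchySeq_tendsto_of_complete
    rw [Metric.cauchySeq_iff]
    intro ε hε
    obtain ⟨s, hsmem, hst⟩ : ∃ s ∈ (Submodule.span ℂ D : Set E), dist t s < ε / (3 * (K0 + 1)) := by
      have := Metric.mem_closure_iff.mp (hdense t) (ε / (3 * (K0 + 1)))
        (by positivity)
      exact this
    obtain ⟨y, hy⟩ := hconv' s hsmem
    have hcs : CauchySeq (fun i => M i s) := hy.cauchySeq
    rw [Metric.cauchySeq_iff] at hcs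
    obtain ⟨N, hN⟩ := hcs (ε / 3) (by positivity)
    refine ⟨N, fun m hm n hn => ?_⟩
    have hb : ∀ i : ι, dist (M i t) (M i s) ≤ K0 * (ε / (3 * (K0 + 1))) := by
      intro i
      rw [dist_eq_norm, ← map_sub]
      calc ‖M i (t - s)‖ ≤ ‖M i‖ * ‖t - s‖ := (M i).le_opNorm _
        _ ≤ K0 * (ε / (3 * (K0 + 1))) := by
            apply mul_le_mul (hK0 i) _ (norm_nonneg _) hK0nn
            rw [← dist_eq_norm]; exact hst.le
    have hsmall : K0 * (ε / (3 * (K0 + 1))) < ε / 3 := by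
      rw [mul_div_assoc']
      rw [div_lt_div_iff₀ (by positivity) (by norm_num : (0:ℝ) < 3)]
      nlinarith [hε, hK0nn]
    calc dist (M m t) (M n t)
        ≤ dist (M m t) (M m s) + dist (M m s) (M n s) + dist (M n s) (M n t) :=
          dist_triangle4 _ _ _ _
      _ < ε / 3 + ε / 3 + ε / 3 := by
          have h1 := lt_of_le_of_lt (hb m) hsmall
          have h2 := hN m hm n hn
          have h3 : dist (M n s) (M n t) < ε / 3 := by
            rw [dist_comm]; exact lt_of_le_of_lt (hb n) hsmall
          linarith
      _ = ε := by ring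
  -- package the limit as a continuous linear map
  haveI : Nonempty F := ⟨0⟩
  have hlim : ∀ t, Tendsto (fun i => M i t) atTop (nhds (limUnder atTop (fun i => M i t))) :=
    fun t => tendsto_nhds_limUnder (hall t)
  refine ⟨LinearMap.mkContinuous
    { toFun := fun t => limUnder atTop (fun i => M i t)
      map_add' := fun u v => by
        refine tendsto_nhds_unique (hlim (u + v)) ?_
        simpa using (hlim u).add (hlim v)
      map_smul' := fun c u => by
        refine tendsto_nhds_unique (hlim (c • u)) ?_
        simpa using (hlim u).const_smul c }
    K0 (fun t => ?_), ?_, fun t => hlim t⟩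
  · exact le_of_tendsto (hlim t).norm (Eventually.of_forall fun i =>
      le_trans ((M i).le_opNorm t) (mul_le_mul_of_nonneg_right (hK0 i) (norm_nonneg _)))
  · exact LinearMap.mkContinuous_norm_le _ hK0nn _

end NetLimit

theorem tendsto_bilin {ι : Type*} {l : Filter ι} {E F G : Type*}
    [NormedAddCommGroup E] [NormedSpace ℂ E] [NormedAddCommGroup F] [NormedSpace ℂ F]
    [NormedAddCommGroup G] [NormedSpace ℂ G]
    (f : E →L[ℂ] F →L[ℂ] G) {m : ι → E} {n : ι → F} {s : E} {t : F}
    (hm : Tendsto m l (nhds s)) (hn : Tendsto n l (nhds t)) :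
    Tendsto (fun i => f (m i) (n i)) l (nhds (f s t)) :=
  (f.isBoundedBilinearMap.continuous.tendsto (s, t)).comp (hm.prodMk_nhds hn)

theorem extendBilinear {A T' X : Type*}
    [NonUnitalNormedRing A] [NormedSpace ℂ A]
    [NonUnitalNormedRing T'] [NormedSpace ℂ T'] [CompleteSpace T']
    [NormedAddCommGroup X] [NormedSpace ℂ X] [CompleteSpace X]
    (Q : IsProjTensorProduct A A T') (β : A → A → (X →L[ℂ] X)) (KB : ℝ) (hKB0 : 0 ≤ KB)
    (hadd1 : ∀ a a' b, β (a + a') b = β a b + β a' b)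
    (hsmul1 : ∀ (r : ℂ) (a b : A), β (r • a) b = r • β a b)
    (hadd2 : ∀ a b b', β a (b + b') = β a b + β a b')
    (hsmul2 : ∀ (r : ℂ) (a b : A), β a (r • b) = r • β a b)
    (hKB : ∀ a b, ‖β a b‖ ≤ KB * ‖a‖ * ‖b‖) :
    ∃ τ : T' →L[ℂ] (X →L[ℂ] X), ∀ a b : A, τ (Q.ι a b) = β a b := by
  classical
  set bb : A × A → (X →L[ℂ] X) := fun p => β p.1 p.2 with hbb
  set vv : A × A → T' := fun p => Q.ι p.1 p.2 with hvv
  set π : ((A × A) →₀ ℂ) →ₗ[ℂ] T' := Finsupp.linearCombination ℂ vv with hπ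
  set χ : ((A × A) →₀ ℂ) →ₗ[ℂ] (X →L[ℂ] X) := Finsupp.linearCombination ℂ bb with hχ
  -- dual functionals implementing `g ((χ c) x)` through `π c`
  have hdual : ∀ (g : X →L[ℂ] ℂ) (x : X), ∃ Φ : T' →L[ℂ] ℂ,
      (∀ c : (A × A) →₀ ℂ, g ((χ c) x) = Φ (π c)) ∧
      ∀ s : T', ‖Φ s‖ ≤ (KB * ‖g‖ * ‖x‖) * ‖s‖ := by
    intro g x
    have hb : ∀ (a b : A), ‖g ((β a b) x)‖ ≤ KB * ‖g‖ * ‖x‖ * ‖a‖ * ‖b‖ := by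
      intro a b
      calc ‖g ((β a b) x)‖ ≤ ‖g‖ * ‖(β a b) x‖ := g.le_opNorm _
        _ ≤ ‖g‖ * (‖β a b‖ * ‖x‖) :=
            mul_le_mul_of_nonneg_left ((β a b).le_opNorm x) (norm_nonneg g)
        _ ≤ ‖g‖ * (KB * ‖a‖ * ‖b‖ * ‖x‖) :=
            mul_le_mul_of_nonneg_left
              (mul_le_mul_of_nonneg_right (hKB a b) (norm_nonneg x))
              (norm_nonneg g)
        _ = KB * ‖g‖ * ‖x‖ * ‖a‖ * ‖b‖ := by ring
    set φ : A →L[ℂ] A →L[ℂ] ℂ := LinearMap.mkContinuous₂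
      (LinearMap.mk₂ ℂ (fun a b => g ((β a b) x))
        (fun a a' b => by
          simp only [hadd1, ContinuousLinearMap.add_apply, map_add])
        (fun r a b => by
          simp only [hsmul1, ContinuousLinearMap.smul_apply, map_smul, smul_eq_mul,
            RingHom.id_apply])
        (fun a b b' => by
          simp only [hadd2, ContinuousLinearMap.add_apply, map_add])
        (fun r a b => by
          simp only [hsmul2, ContinuousLinearMap.smul_apply, map_smul, smul_eq_mul,
            RingHom.id_apply]))
      (KB * ‖g‖ * ‖x‖) (fun a b => hb a b) with hφ
    obtain ⟨Φ, hΦ1, hΦ2⟩ := Q.lift ℂ inferInstance inferInstance inferInstance φ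
    have hφnorm : ‖φ‖ ≤ KB * ‖g‖ * ‖x‖ :=
      LinearMap.mkContinuous₂_norm_le _ (by positivity) _
    refine ⟨Φ, fun c => ?_, fun s => ?_⟩
    · let ev : (X →L[ℂ] X) →ₗ[ℂ] ℂ :=
        { toFun := fun f => g (f x)
          map_add' := fun f f' => by simp
          map_smul' := fun r f => by simp }
      have e1 : g ((χ c) x) = Finsupp.linearCombination ℂ (⇑ev ∘ bb) c := by
        have h := Finsupp.apply_linearCombination (R := ℂ) ev bb c
        simpa [hχ, ev] using h
      have e2 : Φ (π c) = Finsupp.linearCombination ℂ (⇑(Φ : T' →ₗ[ℂ] ℂ) ∘ vv) c := by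
        have h := Finsupp.apply_linearCombination (R := ℂ) (Φ : T' →ₗ[ℂ] ℂ) vv c
        simpa [hπ] using h
      have e3 : ⇑ev ∘ bb = ⇑(Φ : T' →ₗ[ℂ] ℂ) ∘ vv := by
        funext p
        have h := hΦ1 p.1 p.2
        simp only [Function.comp_apply, hbb, hvv, ContinuousLinearMap.coe_coe]
        rw [h, hφ]
        rfl
      rw [e1, e3, ← e2]
    · calc ‖Φ s‖ ≤ ‖Φ‖ * ‖s‖ := Φ.le_opNorm s
        _ ≤ (KB * ‖g‖ * ‖x‖) * ‖s‖ :=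
            mul_le_mul_of_nonneg_right (hΦ2.trans hφnorm) (norm_nonneg s)
  -- χ factors through the range of π
  have hker : LinearMap.ker π ≤ LinearMap.ker χ := by
    intro c hc
    rw [LinearMap.mem_ker] at hc ⊢
    ext x
    rw [ContinuousLinearMap.zero_apply]
    apply NormedSpace.eq_zero_of_forall_dual_eq_zero ℂ
    intro g
    obtain ⟨Φ, hΦc, -⟩ := hdual g x
    rw [hΦc c, hc, map_zero]
  have hχnorm : ∀ c, ‖χ c‖ ≤ KB * ‖π c‖ := by
    intro c
    refine ContinuousLinearMap.opNorm_le_bound _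
      (mul_nonneg hKB0 (norm_nonneg _)) fun x => ?_
    have hM : (0:ℝ) ≤ KB * ‖π c‖ * ‖x‖ :=
      mul_nonneg (mul_nonneg hKB0 (norm_nonneg _)) (norm_nonneg _)
    refine le_trans (NormedSpace.norm_le_dual_bound ℂ ((χ c) x) hM ?_) (le_of_eq (by ring))
    intro g
    obtain ⟨Φ, hΦc, hΦb⟩ := hdual g x
    rw [hΦc c]
    calc ‖Φ (π c)‖ ≤ (KB * ‖g‖ * ‖x‖) * ‖π c‖ := hΦb _
      _ = KB * ‖π c‖ * ‖x‖ * ‖g‖ := by ring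
  -- the induced map on the range of π
  set Vr : Submodule ℂ T' := LinearMap.range π with hVr
  have hVdense : Dense (Vr : Set T') := by
    have h : (Vr : Set T') =
        (Submodule.span ℂ (Set.range fun p : A × A => Q.ι p.1 p.2) : Set T') := by
      rw [hVr, hπ, Finsupp.range_linearCombination]
    rw [h]
    exact Q.dense_span
  set f₀ : Vr →ₗ[ℂ] (X →L[ℂ] X) :=
    (Submodule.liftQ (LinearMap.ker π) χ hker).comp
      ((LinearMap.quotKerEquivRange π).symm : Vr ≃ₗ[ℂ] _).toLinearMap with hf₀def
  have hf₀ : ∀ c : (A × A) →₀ ℂ,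
      f₀ ⟨π c, LinearMap.mem_range_self π c⟩ = χ c := by
    intro c
    have h1 : (LinearMap.quotKerEquivRange π).symm ⟨π c, LinearMap.mem_range_self π c⟩
        = Submodule.Quotient.mk c := by
      apply (LinearMap.quotKerEquivRange π).injective
      rw [LinearEquiv.apply_symm_apply]
      exact Subtype.ext (LinearMap.quotKerEquivRange_apply_mk π c).symm
    rw [hf₀def]
    simp [h1, Submodule.liftQ_apply]
  have hf₀b : ∀ w : Vr, ‖f₀ w‖ ≤ KB * ‖w‖ := by
    rintro ⟨w, hw⟩
    obtain ⟨c, rfl⟩ := hw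
    have h2 : ‖(⟨π c, LinearMap.mem_range_self π c⟩ : Vr)‖ = ‖π c‖ := rfl
    rw [hf₀ c, h2]
    exact hχnorm c
  set fc : Vr →L[ℂ] (X →L[ℂ] X) := f₀.mkContinuous KB hf₀b with hfc
  have hdr : DenseRange (⇑Vr.subtypeL) := by
    have h : Set.range (⇑Vr.subtypeL) = (Vr : Set T') := Subtype.range_coe
    rw [DenseRange, h]
    exact hVdense
  have hui : IsUniformInducing (⇑Vr.subtypeL) := isometry_subtype_coe.isUniformInducing
  refine ⟨fc.extend Vr.subtypeL, fun a b => ?_⟩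
  have h0 : Q.ι a b = Vr.subtypeL ⟨π (Finsupp.single (a, b) 1),
      LinearMap.mem_range_self π _⟩ := by
    simp [hπ, hvv, Finsupp.linearCombination_single]
  rw [h0, ContinuousLinearMap.extend_eq _ hdr hui]
  show f₀ _ = β a b
  rw [hf₀]
  simp [hχ, hbb, Finsupp.linearCombination_single]

set_option maxHeartbeats 1600000 in
/-- for a bounded approximate identity `(e_i)` of `A` and a neo-unital
Banach `A ⊗̂ Aᵒᵖ`-bimodule `X` (action `•`, encoded by `σ`), the limits
`(a⊗b)∘x = lim_i (a⊗e_i)•x•(e_i⊗b)` and `x∘(a⊗b) = lim_i (e_i⊗b)•x•(a⊗e_i)` exist and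
define a Banach `A ⊗̂ A`-bimodule structure `τ` on `X`. -/
theorem stmt7 {A T T' X : Type*} [NonUnitalNormedRing A] [NormedSpace ℂ A] [IsScalarTower ℂ A A] [SMulCommClass ℂ A A] [CompleteSpace A] [NonUnitalNormedRing T] [NormedSpace ℂ T] [IsScalarTower ℂ T T] [SMulCommClass ℂ T T] [CompleteSpace T] [NonUnitalNormedRing T'] [NormedSpace ℂ T'] [IsScalarTower ℂ T' T'] [SMulCommClass ℂ T' T'] [CompleteSpace T']
    [NormedAddCommGroup X] [NormedSpace ℂ X] [CompleteSpace X]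
    (P : IsProjTensorProduct A Aᵐᵒᵖ T) (Q : IsProjTensorProduct A A T')
    (S : BddNet A) (hS : IsBAI S)
    (σ : BanachBimodule T X)
    (hneo : ∀ x : X, ∃ (u v : T) (y : X), x = σ.L u (σ.R v y)) :
    ∃ τ : BanachBimodule T' X, ∀ (a b : A) (x : X),
      Filter.Tendsto
        (fun i => σ.L (P.ι a (MulOpposite.op (S.z i))) (σ.R (P.ι (S.z i) (MulOpposite.op b)) x))
        S.filter (nhds (τ.L (Q.ι a b) x)) ∧
      Filter.Tendsto
        (fun i => σ.L (P.ι (S.z i) (MulOpposite.op b)) (σ.R (P.ι a (MulOpposite.op (S.z i))) x))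
        S.filter (nhds (τ.R (Q.ι a b) x)) := by
  classical
  letI := S.dir
  haveI := S.ne
  set C0 := max S.C 0 with hC0def
  have hz : ∀ i, ‖S.z i‖ ≤ C0 := fun i => le_trans (S.bdd i) (le_max_left _ _)
  have hC0 : (0:ℝ) ≤ C0 := le_max_right _ _
  -- norms of elementary-tensor multipliers
  have hwa : ∀ (a : A) (i : S.ι), ‖P.ι a (op (S.z i))‖ ≤ ‖a‖ * C0 := by
    intro a i
    refine le_trans (P.norm_ι _ _) ?_
    rw [norm_op]
    exact mul_le_mul_of_nonneg_left (hz i) (norm_nonneg a)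
  have hwb : ∀ (b : A) (i : S.ι), ‖P.ι (S.z i) (op b)‖ ≤ C0 * ‖b‖ := by
    intro b i
    refine le_trans (P.norm_ι _ _) ?_
    rw [norm_op]
    exact mul_le_mul_of_nonneg_right (hz i) (norm_nonneg b)
  -- limits of multiplications against elementary tensors
  have key1 : ∀ (a p : A) (q : Aᵐᵒᵖ), Tendsto (fun i => P.ι a (op (S.z i)) * P.ι p q)
      atTop (nhds (P.ι (a * p) q)) := by
    intro a p q
    have he : ∀ i, P.ι a (op (S.z i)) * P.ι p q = P.ι (a * p) (op (q.unop * S.z i)) := by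
      intro i
      rw [P.ι_mul]
      congr 1
    have h : Tendsto (fun i => P.ι (a * p) (op (q.unop * S.z i))) atTop
        (nhds (P.ι (a * p) (op q.unop))) :=
      ((P.ι (a * p)).continuous.tendsto _).comp
        ((MulOpposite.continuous_op.tendsto _).comp ((hS q.unop).1))
    rw [op_unop] at h
    simpa only [he] using h
  have key2 : ∀ (b p : A) (q : Aᵐᵒᵖ), Tendsto (fun i => P.ι (S.z i) (op b) * P.ι p q)
      atTop (nhds (P.ι p (op (q.unop * b)))) := by
    intro b p q
    have he : ∀ i, P.ι (S.z i) (op b) * P.ι p q = P.ι (S.z i * p) (op (q.unop * b)) := by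
      intro i
      rw [P.ι_mul]
      congr 1
    have h : Tendsto (fun i => P.ι (S.z i * p) (op (q.unop * b))) atTop
        (nhds (P.ι p (op (q.unop * b)))) :=
      ((P.ι.flip (op (q.unop * b))).continuous.tendsto _).comp ((hS p).2)
    simpa only [he, ContinuousLinearMap.flip_apply] using h
  have key3 : ∀ (b p : A) (q : Aᵐᵒᵖ), Tendsto (fun i => P.ι p q * P.ι (S.z i) (op b))
      atTop (nhds (P.ι p (op (b * q.unop)))) := by
    intro b p q
    have he : ∀ i, P.ι p q * P.ι (S.z i) (op b) = P.ι (p * S.z i) (op (b * q.unop)) := by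
      intro i
      rw [P.ι_mul]
      congr 1
    have h : Tendsto (fun i => P.ι (p * S.z i) (op (b * q.unop))) atTop
        (nhds (P.ι p (op (b * q.unop)))) :=
      ((P.ι.flip (op (b * q.unop))).continuous.tendsto _).comp ((hS p).1)
    simpa only [he, ContinuousLinearMap.flip_apply] using h
  have key4 : ∀ (a p : A) (q : Aᵐᵒᵖ), Tendsto (fun i => P.ι p q * P.ι a (op (S.z i)))
      atTop (nhds (P.ι (p * a) q)) := by
    intro a p q
    have he : ∀ i, P.ι p q * P.ι a (op (S.z i)) = P.ι (p * a) (op (S.z i * q.unop)) := by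
      intro i
      rw [P.ι_mul]
      congr 1
    have h : Tendsto (fun i => P.ι (p * a) (op (S.z i * q.unop))) atTop
        (nhds (P.ι (p * a) (op q.unop))) :=
      ((P.ι (p * a)).continuous.tendsto _).comp
        ((MulOpposite.continuous_op.tendsto _).comp ((hS q.unop).2))
    rw [op_unop] at h
    simpa only [he] using h
  -- left/right multiplication limit operators on T
  have mulL : ∀ (w : S.ι → T) (c : ℝ), (∀ i, ‖w i‖ ≤ c) →
      (∀ (p : A) (q : Aᵐᵒᵖ), ∃ y : T, Tendsto (fun i => w i * P.ι p q) atTop (nhds y)) →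
      ∃ Λ : T →L[ℂ] T, ∀ t, Tendsto (fun i => w i * t) atTop (nhds (Λ t)) := by
    intro w c hw hgen
    have hc : ∀ s ∈ (Set.range fun p : A × Aᵐᵒᵖ => P.ι p.1 p.2), ∃ y : T,
        Tendsto (fun i => ContinuousLinearMap.mul ℂ T (w i) s) atTop (nhds y) := by
      rintro s ⟨⟨p, q⟩, rfl⟩
      simpa using hgen p q
    obtain ⟨Λ, -, hΛ⟩ := netLimit (fun i => ContinuousLinearMap.mul ℂ T (w i)) c
      (fun i => le_trans (ContinuousLinearMap.opNorm_mul_apply_le ℂ T (w i)) (hw i))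
      (Set.range fun p : A × Aᵐᵒᵖ => P.ι p.1 p.2) P.dense_span hc
    exact ⟨Λ, fun t => by simpa using hΛ t⟩
  have mulR : ∀ (w : S.ι → T) (c : ℝ), (∀ i, ‖w i‖ ≤ c) →
      (∀ (p : A) (q : Aᵐᵒᵖ), ∃ y : T, Tendsto (fun i => P.ι p q * w i) atTop (nhds y)) →
      ∃ Λ : T →L[ℂ] T, ∀ t, Tendsto (fun i => t * w i) atTop (nhds (Λ t)) := by
    intro w c hw hgen
    have hn : ∀ i, ‖(ContinuousLinearMap.mul ℂ T).flip (w i)‖ ≤ c := by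
      intro i
      refine ContinuousLinearMap.opNorm_le_bound _
        (le_trans (norm_nonneg (w i)) (hw i)) fun t => ?_
      simp only [ContinuousLinearMap.flip_apply, ContinuousLinearMap.mul_apply']
      calc ‖t * w i‖ ≤ ‖t‖ * ‖w i‖ := norm_mul_le t (w i)
        _ ≤ ‖t‖ * c := mul_le_mul_of_nonneg_left (hw i) (norm_nonneg t)
        _ = c * ‖t‖ := mul_comm _ _
    have hc : ∀ s ∈ (Set.range fun p : A × Aᵐᵒᵖ => P.ι p.1 p.2), ∃ y : T,
        Tendsto (fun i => (ContinuousLinearMap.mul ℂ T).flip (w i) s) atTop (nhds y) := by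
      rintro s ⟨⟨p, q⟩, rfl⟩
      simpa using hgen p q
    obtain ⟨Λ, -, hΛ⟩ := netLimit (fun i => (ContinuousLinearMap.mul ℂ T).flip (w i)) c
      hn (Set.range fun p : A × Aᵐᵒᵖ => P.ι p.1 p.2) P.dense_span hc
    exact ⟨Λ, fun t => by simpa using hΛ t⟩
  -- the four limit operators
  have hΛLex : ∀ a : A, ∃ Λ : T →L[ℂ] T,
      ∀ t, Tendsto (fun i => P.ι a (op (S.z i)) * t) atTop (nhds (Λ t)) :=
    fun a => mulL _ (‖a‖ * C0) (hwa a) (fun p q => ⟨_, key1 a p q⟩)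
  choose ΛL hΛL using hΛLex
  have hΛL'ex : ∀ b : A, ∃ Λ : T →L[ℂ] T,
      ∀ t, Tendsto (fun i => P.ι (S.z i) (op b) * t) atTop (nhds (Λ t)) :=
    fun b => mulL _ (C0 * ‖b‖) (hwb b) (fun p q => ⟨_, key2 b p q⟩)
  choose ΛL' hΛL' using hΛL'ex
  have hΡRex : ∀ b : A, ∃ Λ : T →L[ℂ] T,
      ∀ t, Tendsto (fun i => t * P.ι (S.z i) (op b)) atTop (nhds (Λ t)) :=
    fun b => mulR _ (C0 * ‖b‖) (hwb b) (fun p q => ⟨_, key3 b p q⟩)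
  choose ΡR hΡR using hΡRex
  have hΡR'ex : ∀ a : A, ∃ Λ : T →L[ℂ] T,
      ∀ t, Tendsto (fun i => t * P.ι a (op (S.z i))) atTop (nhds (Λ t)) :=
    fun a => mulR _ (‖a‖ * C0) (hwa a) (fun p q => ⟨_, key4 a p q⟩)
  choose ΡR' hΡR' using hΡR'ex
  -- their values on elementary tensors
  have eΛL : ∀ (a p : A) (q : Aᵐᵒᵖ), ΛL a (P.ι p q) = P.ι (a * p) q :=
    fun a p q => tendsto_nhds_unique (hΛL a (P.ι p q)) (key1 a p q)
  have eΛL' : ∀ (b p : A) (q : Aᵐᵒᵖ), ΛL' b (P.ι p q) = P.ι p (op (q.unop * b)) :=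
    fun b p q => tendsto_nhds_unique (hΛL' b (P.ι p q)) (key2 b p q)
  have eΡR : ∀ (b p : A) (q : Aᵐᵒᵖ), ΡR b (P.ι p q) = P.ι p (op (b * q.unop)) :=
    fun b p q => tendsto_nhds_unique (hΡR b (P.ι p q)) (key3 b p q)
  have eΡR' : ∀ (a p : A) (q : Aᵐᵒᵖ), ΡR' a (P.ι p q) = P.ι (p * a) q :=
    fun a p q => tendsto_nhds_unique (hΡR' a (P.ι p q)) (key4 a p q)
  -- algebraic identities between the limit operators
  have idLL : ∀ a c : A, ΛL (a * c) = (ΛL a).comp (ΛL c) := by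
    intro a c
    refine ContinuousLinearMap.ext_on P.dense_span ?_
    rintro _ ⟨⟨p, q⟩, rfl⟩
    simp [eΛL, mul_assoc]
  have idRR : ∀ b d : A, ΡR (b * d) = (ΡR b).comp (ΡR d) := by
    intro b d
    refine ContinuousLinearMap.ext_on P.dense_span ?_
    rintro _ ⟨⟨p, q⟩, rfl⟩
    simp [eΡR, unop_op, mul_assoc]
  have idL'L' : ∀ b d : A, ΛL' (b * d) = (ΛL' d).comp (ΛL' b) := by
    intro b d
    refine ContinuousLinearMap.ext_on P.dense_span ?_
    rintro _ ⟨⟨p, q⟩, rfl⟩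
    simp [eΛL', unop_op, mul_assoc]
  have idR'R' : ∀ a c : A, ΡR' (a * c) = (ΡR' c).comp (ΡR' a) := by
    intro a c
    refine ContinuousLinearMap.ext_on P.dense_span ?_
    rintro _ ⟨⟨p, q⟩, rfl⟩
    simp [eΡR', mul_assoc]
  have idC1 : ∀ a d : A, (ΛL' d).comp (ΛL a) = (ΛL a).comp (ΛL' d) := by
    intro a d
    refine ContinuousLinearMap.ext_on P.dense_span ?_
    rintro _ ⟨⟨p, q⟩, rfl⟩
    simp [eΛL, eΛL', unop_op]
  have idC2 : ∀ b c : A, (ΡR' c).comp (ΡR b) = (ΡR b).comp (ΡR' c) := by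
    intro b c
    refine ContinuousLinearMap.ext_on P.dense_span ?_
    rintro _ ⟨⟨p, q⟩, rfl⟩
    simp [eΡR, eΡR', unop_op]
  -- the basic bimodule computation
  have hmod : ∀ (s r u' v' : T) (y' : X),
      σ.L s (σ.R r (σ.L u' (σ.R v' y'))) = σ.L (s * u') (σ.R (v' * r) y') := by
    intro s r u' v' y'
    have h1 : σ.R r (σ.L u' (σ.R v' y')) = σ.L u' (σ.R r (σ.R v' y')) := σ.LR_comm u' r _
    have h2 : σ.R r (σ.R v' y') = σ.R (v' * r) y' := by rw [σ.R_mul]; rfl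
    have h3 : σ.L s (σ.L u' (σ.R (v' * r) y')) = σ.L (s * u') (σ.R (v' * r) y') := by
      rw [σ.L_mul]; rfl
    rw [h1, h2, h3]
  -- convergence of the candidate actions on decomposed elements
  have hβgen : ∀ (a b : A) (u' v' : T) (y' : X),
      Tendsto (fun i => σ.L (P.ι a (op (S.z i)))
          (σ.R (P.ι (S.z i) (op b)) (σ.L u' (σ.R v' y'))))
        atTop (nhds (σ.L (ΛL a u') (σ.R (ΡR b v') y'))) := by
    intro a b u' v' y'
    have he : ∀ i, σ.L (P.ι a (op (S.z i))) (σ.R (P.ι (S.z i) (op b)) (σ.L u' (σ.R v' y')))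
        = σ.L (P.ι a (op (S.z i)) * u') (σ.R (v' * P.ι (S.z i) (op b)) y') :=
      fun i => hmod _ _ _ _ _
    have h2 : Tendsto (fun i => σ.R (v' * P.ι (S.z i) (op b)) y') atTop
        (nhds (σ.R (ΡR b v') y')) := by
      have h := ((σ.R.flip y').continuous.tendsto _).comp (hΡR b v')
      simpa [Function.comp_def] using h
    simpa only [he] using tendsto_bilin σ.L (hΛL a u') h2
  have hγgen : ∀ (a b : A) (u' v' : T) (y' : X),
      Tendsto (fun i => σ.L (P.ι (S.z i) (op b))
          (σ.R (P.ι a (op (S.z i))) (σ.L u' (σ.R v' y'))))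
        atTop (nhds (σ.L (ΛL' b u') (σ.R (ΡR' a v') y'))) := by
    intro a b u' v' y'
    have he : ∀ i, σ.L (P.ι (S.z i) (op b)) (σ.R (P.ι a (op (S.z i))) (σ.L u' (σ.R v' y')))
        = σ.L (P.ι (S.z i) (op b) * u') (σ.R (v' * P.ι a (op (S.z i))) y') :=
      fun i => hmod _ _ _ _ _
    have h2 : Tendsto (fun i => σ.R (v' * P.ι a (op (S.z i))) y') atTop
        (nhds (σ.R (ΡR' a v') y')) := by
      have h := ((σ.R.flip y').continuous.tendsto _).comp (hΡR' a v')
      simpa [Function.comp_def] using h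
    simpa only [he] using tendsto_bilin σ.L (hΛL' b u') h2
  -- the candidate left action, pointwise
  have hβex : ∀ a b : A, ∃ β : X →L[ℂ] X,
      ‖β‖ ≤ (‖σ.L‖ * ‖σ.R‖ * C0 * C0) * ‖a‖ * ‖b‖ ∧
      ∀ x, Tendsto (fun i => σ.L (P.ι a (op (S.z i))) (σ.R (P.ι (S.z i) (op b)) x))
        atTop (nhds (β x)) := by
    intro a b
    have hKnn : (0:ℝ) ≤ (‖σ.L‖ * ‖σ.R‖ * C0 * C0) * ‖a‖ * ‖b‖ := by positivity
    have hMn : ∀ i, ‖(σ.L (P.ι a (op (S.z i)))).comp (σ.R (P.ι (S.z i) (op b)))‖ ≤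
        (‖σ.L‖ * ‖σ.R‖ * C0 * C0) * ‖a‖ * ‖b‖ := by
      intro i
      calc ‖(σ.L (P.ι a (op (S.z i)))).comp (σ.R (P.ι (S.z i) (op b)))‖
          ≤ ‖σ.L (P.ι a (op (S.z i)))‖ * ‖σ.R (P.ι (S.z i) (op b))‖ :=
            ContinuousLinearMap.opNorm_comp_le _ _
        _ ≤ (‖σ.L‖ * (‖a‖ * C0)) * (‖σ.R‖ * (C0 * ‖b‖)) := by
            apply mul_le_mul _ _ (norm_nonneg _) (by positivity)
            · exact le_trans (σ.L.le_opNorm _)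
                (mul_le_mul_of_nonneg_left (hwa a i) (norm_nonneg _))
            · exact le_trans (σ.R.le_opNorm _)
                (mul_le_mul_of_nonneg_left (hwb b i) (norm_nonneg _))
        _ = (‖σ.L‖ * ‖σ.R‖ * C0 * C0) * ‖a‖ * ‖b‖ := by ring
    have hdense : Dense (Submodule.span ℂ (Set.univ : Set X) : Set X) := by
      rw [Submodule.span_univ]
      simpa using dense_univ
    have hcv : ∀ x ∈ (Set.univ : Set X), ∃ y, Tendsto
        (fun i => ((σ.L (P.ι a (op (S.z i)))).comp (σ.R (P.ι (S.z i) (op b)))) x)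
        atTop (nhds y) := by
      intro x _
      obtain ⟨u', v', y', hx⟩ := hneo x
      rw [hx]
      exact ⟨_, by simpa using hβgen a b u' v' y'⟩
    obtain ⟨β, hn, hβ⟩ := netLimit
      (fun i => (σ.L (P.ι a (op (S.z i)))).comp (σ.R (P.ι (S.z i) (op b))))
      ((‖σ.L‖ * ‖σ.R‖ * C0 * C0) * ‖a‖ * ‖b‖) hMn Set.univ hdense hcv
    exact ⟨β, le_trans hn (by rw [max_eq_left hKnn]), fun x => by simpa using hβ x⟩
  choose β hβnorm hβ using hβex
  have hγex : ∀ a b : A, ∃ γ : X →L[ℂ] X,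
      ‖γ‖ ≤ (‖σ.L‖ * ‖σ.R‖ * C0 * C0) * ‖a‖ * ‖b‖ ∧
      ∀ x, Tendsto (fun i => σ.L (P.ι (S.z i) (op b)) (σ.R (P.ι a (op (S.z i))) x))
        atTop (nhds (γ x)) := by
    intro a b
    have hKnn : (0:ℝ) ≤ (‖σ.L‖ * ‖σ.R‖ * C0 * C0) * ‖a‖ * ‖b‖ := by positivity
    have hMn : ∀ i, ‖(σ.L (P.ι (S.z i) (op b))).comp (σ.R (P.ι a (op (S.z i))))‖ ≤
        (‖σ.L‖ * ‖σ.R‖ * C0 * C0) * ‖a‖ * ‖b‖ := by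
      intro i
      calc ‖(σ.L (P.ι (S.z i) (op b))).comp (σ.R (P.ι a (op (S.z i))))‖
          ≤ ‖σ.L (P.ι (S.z i) (op b))‖ * ‖σ.R (P.ι a (op (S.z i)))‖ :=
            ContinuousLinearMap.opNorm_comp_le _ _
        _ ≤ (‖σ.L‖ * (C0 * ‖b‖)) * (‖σ.R‖ * (‖a‖ * C0)) := by
            apply mul_le_mul _ _ (norm_nonneg _) (by positivity)
            · exact le_trans (σ.L.le_opNorm _)
                (mul_le_mul_of_nonneg_left (hwb b i) (norm_nonneg _))
            · exact le_trans (σ.R.le_opNorm _)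
                (mul_le_mul_of_nonneg_left (hwa a i) (norm_nonneg _))
        _ = (‖σ.L‖ * ‖σ.R‖ * C0 * C0) * ‖a‖ * ‖b‖ := by ring
    have hdense : Dense (Submodule.span ℂ (Set.univ : Set X) : Set X) := by
      rw [Submodule.span_univ]
      simpa using dense_univ
    have hcv : ∀ x ∈ (Set.univ : Set X), ∃ y, Tendsto
        (fun i => ((σ.L (P.ι (S.z i) (op b))).comp (σ.R (P.ι a (op (S.z i))))) x)
        atTop (nhds y) := by
      intro x _
      obtain ⟨u', v', y', hx⟩ := hneo x
      rw [hx]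
      exact ⟨_, by simpa using hγgen a b u' v' y'⟩
    obtain ⟨γ, hn, hγ⟩ := netLimit
      (fun i => (σ.L (P.ι (S.z i) (op b))).comp (σ.R (P.ι a (op (S.z i)))))
      ((‖σ.L‖ * ‖σ.R‖ * C0 * C0) * ‖a‖ * ‖b‖) hMn Set.univ hdense hcv
    exact ⟨γ, le_trans hn (by rw [max_eq_left hKnn]), fun x => by simpa using hγ x⟩
  choose γ hγnorm hγ using hγex
  -- values on decomposed elements
  have hvalβ : ∀ (a b : A) (u' v' : T) (y' : X),
      β a b (σ.L u' (σ.R v' y')) = σ.L (ΛL a u') (σ.R (ΡR b v') y') :=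
    fun a b u' v' y' => tendsto_nhds_unique (hβ a b _) (hβgen a b u' v' y')
  have hvalγ : ∀ (a b : A) (u' v' : T) (y' : X),
      γ a b (σ.L u' (σ.R v' y')) = σ.L (ΛL' b u') (σ.R (ΡR' a v') y') :=
    fun a b u' v' y' => tendsto_nhds_unique (hγ a b _) (hγgen a b u' v' y')
  -- bilinearity of β and γ
  have hβadd1 : ∀ a a' b, β (a + a') b = β a b + β a' b := by
    intro a a' b
    ext x
    refine tendsto_nhds_unique (hβ (a + a') b x) ?_
    have h := (hβ a b x).add (hβ a' b x)
    simp only [ContinuousLinearMap.add_apply]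
    simpa only [map_add, ContinuousLinearMap.add_apply] using h
  have hβsmul1 : ∀ (r : ℂ) (a b : A), β (r • a) b = r • β a b := by
    intro r a b
    ext x
    refine tendsto_nhds_unique (hβ (r • a) b x) ?_
    have h := (hβ a b x).const_smul r
    simp only [ContinuousLinearMap.smul_apply]
    simpa only [map_smul, ContinuousLinearMap.smul_apply] using h
  have hβadd2 : ∀ a b b', β a (b + b') = β a b + β a b' := by
    intro a b b'
    ext x
    refine tendsto_nhds_unique (hβ a (b + b') x) ?_
    have h := (hβ a b x).add (hβ a b' x)
    simp only [ContinuousLinearMap.add_apply]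
    simpa only [op_add, map_add, ContinuousLinearMap.add_apply] using h
  have hβsmul2 : ∀ (r : ℂ) (a b : A), β a (r • b) = r • β a b := by
    intro r a b
    ext x
    refine tendsto_nhds_unique (hβ a (r • b) x) ?_
    have h := (hβ a b x).const_smul r
    simp only [ContinuousLinearMap.smul_apply]
    simpa only [op_smul, map_smul, ContinuousLinearMap.smul_apply] using h
  have hγadd1 : ∀ a a' b, γ (a + a') b = γ a b + γ a' b := by
    intro a a' b
    ext x
    refine tendsto_nhds_unique (hγ (a + a') b x) ?_
    have h := (hγ a b x).add (hγ a' b x)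
    simp only [ContinuousLinearMap.add_apply]
    simpa only [map_add, ContinuousLinearMap.add_apply] using h
  have hγsmul1 : ∀ (r : ℂ) (a b : A), γ (r • a) b = r • γ a b := by
    intro r a b
    ext x
    refine tendsto_nhds_unique (hγ (r • a) b x) ?_
    have h := (hγ a b x).const_smul r
    simp only [ContinuousLinearMap.smul_apply]
    simpa only [map_smul, ContinuousLinearMap.smul_apply] using h
  have hγadd2 : ∀ a b b', γ a (b + b') = γ a b + γ a b' := by
    intro a b b'
    ext x
    refine tendsto_nhds_unique (hγ a (b + b') x) ?_
    have h := (hγ a b x).add (hγ a b' x)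
    simp only [ContinuousLinearMap.add_apply]
    simpa only [op_add, map_add, ContinuousLinearMap.add_apply] using h
  have hγsmul2 : ∀ (r : ℂ) (a b : A), γ a (r • b) = r • γ a b := by
    intro r a b
    ext x
    refine tendsto_nhds_unique (hγ a (r • b) x) ?_
    have h := (hγ a b x).const_smul r
    simp only [ContinuousLinearMap.smul_apply]
    simpa only [op_smul, map_smul, ContinuousLinearMap.smul_apply] using h
  -- extend to continuous linear maps on T'
  have hKcnn : (0:ℝ) ≤ ‖σ.L‖ * ‖σ.R‖ * C0 * C0 := by positivity
  obtain ⟨τL, hτL⟩ := extendBilinear Q β (‖σ.L‖ * ‖σ.R‖ * C0 * C0) hKcnn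
    hβadd1 hβsmul1 hβadd2 hβsmul2 (fun a b => hβnorm a b)
  obtain ⟨τR, hτR⟩ := extendBilinear Q γ (‖σ.L‖ * ‖σ.R‖ * C0 * C0) hKcnn
    hγadd1 hγsmul1 hγadd2 hγsmul2 (fun a b => hγnorm a b)
  -- pointwise algebraic laws on generators
  have hLgen : ∀ (a b c d : A) (x : X), β (a * c) (b * d) x = β a b (β c d x) := by
    intro a b c d x
    obtain ⟨u', v', y', hx⟩ := hneo x
    rw [hx, hvalβ, hvalβ, hvalβ, idLL, idRR]
    rfl
  have hRgen : ∀ (a b c d : A) (x : X), γ (a * c) (b * d) x = γ c d (γ a b x) := by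
    intro a b c d x
    obtain ⟨u', v', y', hx⟩ := hneo x
    rw [hx, hvalγ, hvalγ, hvalγ, idL'L', idR'R']
    rfl
  have hCgen : ∀ (a b c d : A) (x : X), γ c d (β a b x) = β a b (γ c d x) := by
    intro a b c d x
    obtain ⟨u', v', y', hx⟩ := hneo x
    rw [hx, hvalβ, hvalγ, hvalγ, hvalβ]
    have h1 := congrArg (fun f => σ.L (f u') (σ.R (ΡR' c (ΡR b v')) y')) (idC1 a d)
    simp only [ContinuousLinearMap.comp_apply] at h1
    rw [h1]
    have h2 := congrArg (fun f => σ.L (ΛL a (ΛL' d u')) (σ.R (f v') y')) (idC2 b c)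
    simp only [ContinuousLinearMap.comp_apply] at h2
    rw [h2]
  -- the bimodule laws, by density
  have hLmul : ∀ s t : T', τL (s * t) = (τL s).comp (τL t) := by
    have step1 : ∀ (a b : A) (t : T'), τL (Q.ι a b * t) = (τL (Q.ι a b)).comp (τL t) := by
      intro a b t
      have hfun : τL.comp (ContinuousLinearMap.mul ℂ T' (Q.ι a b)) =
          ((ContinuousLinearMap.compL ℂ X X X) (τL (Q.ι a b))).comp τL := by
        refine ContinuousLinearMap.ext_on Q.dense_span ?_
        rintro _ ⟨⟨c, d⟩, rfl⟩
        simp only [ContinuousLinearMap.comp_apply, ContinuousLinearMap.mul_apply',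
          ContinuousLinearMap.compL_apply]
        rw [Q.ι_mul, hτL, hτL, hτL]
        ext x
        simpa using hLgen a b c d x
      have h := ContinuousLinearMap.ext_iff.mp hfun t
      simpa using h
    intro s t
    have hfun : τL.comp ((ContinuousLinearMap.mul ℂ T').flip t) =
        ((ContinuousLinearMap.compL ℂ X X X).flip (τL t)).comp τL := by
      refine ContinuousLinearMap.ext_on Q.dense_span ?_
      rintro _ ⟨⟨a, b⟩, rfl⟩
      simp only [ContinuousLinearMap.comp_apply, ContinuousLinearMap.flip_apply,
        ContinuousLinearMap.mul_apply', ContinuousLinearMap.compL_apply]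
      exact step1 a b t
    have h := ContinuousLinearMap.ext_iff.mp hfun s
    simpa using h
  have hRmul : ∀ s t : T', τR (s * t) = (τR t).comp (τR s) := by
    have step1 : ∀ (a b : A) (t : T'), τR (Q.ι a b * t) = (τR t).comp (τR (Q.ι a b)) := by
      intro a b t
      have hfun : τR.comp (ContinuousLinearMap.mul ℂ T' (Q.ι a b)) =
          ((ContinuousLinearMap.compL ℂ X X X).flip (τR (Q.ι a b))).comp τR := by
        refine ContinuousLinearMap.ext_on Q.dense_span ?_
        rintro _ ⟨⟨c, d⟩, rfl⟩
        simp only [ContinuousLinearMap.comp_apply, ContinuousLinearMap.flip_apply,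
          ContinuousLinearMap.mul_apply', ContinuousLinearMap.compL_apply]
        rw [Q.ι_mul, hτR, hτR, hτR]
        ext x
        simpa using hRgen a b c d x
      have h := ContinuousLinearMap.ext_iff.mp hfun t
      simpa using h
    intro s t
    have hfun : τR.comp ((ContinuousLinearMap.mul ℂ T').flip t) =
        ((ContinuousLinearMap.compL ℂ X X X) (τR t)).comp τR := by
      refine ContinuousLinearMap.ext_on Q.dense_span ?_
      rintro _ ⟨⟨a, b⟩, rfl⟩
      simp only [ContinuousLinearMap.comp_apply, ContinuousLinearMap.flip_apply,
        ContinuousLinearMap.mul_apply', ContinuousLinearMap.compL_apply]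
      exact step1 a b t
    have h := ContinuousLinearMap.ext_iff.mp hfun s
    simpa using h
  have hLR : ∀ (s t : T') (x : X), τR t (τL s x) = τL s (τR t x) := by
    have step1 : ∀ (a b : A) (t : T') (x : X),
        τR t (τL (Q.ι a b) x) = τL (Q.ι a b) (τR t x) := by
      intro a b t x
      have hfun : τR.flip (τL (Q.ι a b) x) = (τL (Q.ι a b)).comp (τR.flip x) := by
        refine ContinuousLinearMap.ext_on Q.dense_span ?_
        rintro _ ⟨⟨c, d⟩, rfl⟩
        simp only [ContinuousLinearMap.comp_apply, ContinuousLinearMap.flip_apply]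
        rw [hτL, hτR]
        exact hCgen a b c d x
      have h := ContinuousLinearMap.ext_iff.mp hfun t
      simpa using h
    intro s t x
    have hfun : (τR t).comp (τL.flip x) = τL.flip (τR t x) := by
      refine ContinuousLinearMap.ext_on Q.dense_span ?_
      rintro _ ⟨⟨a, b⟩, rfl⟩
      simp only [ContinuousLinearMap.comp_apply, ContinuousLinearMap.flip_apply]
      exact step1 a b t x
    have h := ContinuousLinearMap.ext_iff.mp hfun s
    simpa using h
  -- assemble the bimodule and conclude
  refine ⟨⟨τL, τR, hLmul, hRmul, hLR⟩, fun a b x => ⟨?_, ?_⟩⟩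
  · show Tendsto _ atTop _
    rw [show (⟨τL, τR, hLmul, hRmul, hLR⟩ :
      BanachBimodule T' X).L = τL from rfl, hτL]
    exact hβ a b x
  · show Tendsto _ atTop _
    rw [show (⟨τL, τR, hLmul, hRmul, hLR⟩ :
      BanachBimodule T' X).R = τR from rfl, hτR]
    exact hγ a b x
end

section
/- Let B be a Banach algebra and A a closed subalgebra of B such that the projective tensor product A ⊗̂ B is weakly amenable. Then the closed linear span of {ab : a, b ∈ A} equals A, i.e., A² is dense in A. -/
open Filter Topology MulOpposite

/-- if `A` is a closed subalgebra of `B` (encoded by an isometric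
multiplicative embedding `j : A → B`) and `A ⊗̂ B` is weakly amenable, then
`A² = span{ab : a, b ∈ A}` is dense in `A`. -/
theorem stmt10 {A B T : Type*} [NonUnitalNormedRing A] [NormedSpace ℂ A] [IsScalarTower ℂ A A] [SMulCommClass ℂ A A] [CompleteSpace A] [NonUnitalNormedRing B] [NormedSpace ℂ B] [IsScalarTower ℂ B B] [SMulCommClass ℂ B B] [CompleteSpace B] [NonUnitalNormedRing T] [NormedSpace ℂ T] [IsScalarTower ℂ T T] [SMulCommClass ℂ T T] [CompleteSpace T]
    (j : A →L[ℂ] B) (hj_iso : ∀ a : A, ‖j a‖ = ‖a‖)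
    (hj_mul : ∀ a b : A, j (a * b) = j a * j b)
    (P : IsProjTensorProduct A B T) (hT : WeaklyAmenable T) :
    Dense (Submodule.span ℂ {x : A | ∃ a b : A, a * b = x} : Set A) := by
  by_contra hnd
  -- pick `a₀` outside the closure of the span
  rw [dense_iff_closure_eq] at hnd
  obtain ⟨a₀, ha₀⟩ : ∃ a₀, a₀ ∉ closure
      ((Submodule.span ℂ {x : A | ∃ a b : A, a * b = x} : Submodule ℂ A) : Set A) := by
    by_contra h
    push_neg at h
    exact hnd (Set.eq_univ_of_forall h)
  set p : Submodule ℂ A := Submodule.span ℂ {x : A | ∃ a b : A, a * b = x} with hp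
  have ha₀' : a₀ ∉ closure (p : Set A) := ha₀
  -- separate `a₀` from the closed convex set `closure p`
  have hconv : Convex ℝ (closure (p : Set A)) :=
    ((p.restrictScalars ℝ).convex).closure
  obtain ⟨f, u, hfu, hua₀⟩ :=
    RCLike.geometric_hahn_banach_closed_point (𝕜 := ℂ) hconv isClosed_closure ha₀'
  simp only [RCLike.re_to_complex] at hfu hua₀
  -- `f` vanishes on the span
  have hf0 : ∀ y ∈ p, f y = 0 := by
    intro y hy
    by_contra hfy
    have hnorm : (0 : ℝ) < Complex.normSq (f y) := by
      simpa [Complex.normSq_pos] using hfy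
    set t : ℝ := (|u| + 1) / Complex.normSq (f y) with ht
    have hmem : ((t : ℂ) * (starRingEnd ℂ) (f y)) • y ∈ p := p.smul_mem _ hy
    have hlt := hfu _ (subset_closure hmem)
    have : Complex.re (f (((t : ℂ) * (starRingEnd ℂ) (f y)) • y))
        = t * Complex.normSq (f y) := by
      rw [map_smul]
      simp [Complex.mul_re, Complex.normSq_apply, Complex.mul_conj]
      ring
    rw [this, ht, div_mul_cancel₀ _ (ne_of_gt hnorm)] at hlt
    have : u ≤ |u| := le_abs_self u
    linarith
  have hfprod : ∀ a b : A, f (a * b) = 0 := fun a b =>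
    hf0 _ (Submodule.subset_span ⟨a, b, rfl⟩)
  -- `f a₀ ≠ 0`
  have hfa₀ : f a₀ ≠ 0 := by
    intro h
    have h0 : Complex.re (f (0 : A)) < u := hfu _ (subset_closure p.zero_mem)
    rw [map_zero] at h0
    rw [h] at hua₀
    simp at hua₀ h0
    linarith
  -- `a₀ ≠ 0`, hence `j a₀ ≠ 0`
  have ha₀ne : a₀ ≠ 0 := by
    intro h; exact ha₀' (h ▸ subset_closure p.zero_mem)
  have hb₀ne : j a₀ ≠ 0 := by
    intro h
    apply ha₀ne
    have := hj_iso a₀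
    rw [h, norm_zero] at this
    exact norm_eq_zero.mp this.symm
  obtain ⟨g, -, hg⟩ := exists_dual_vector ℂ (j a₀) (norm_ne_zero_iff.mpr hb₀ne)
  -- build the functional `μ` on `T`
  obtain ⟨μ, hμ, -⟩ := P.lift ℂ inferInstance inferInstance inferInstance (f.smulRight g)
  have hμ' : ∀ a b, μ (P.ι a b) = f a * g b := by
    intro a b; rw [hμ]; simp
  -- `μ` vanishes on all products
  have hstep1 : ∀ (a : A) (b : B) (t : T), μ (P.ι a b * t) = 0 := by
    intro a b
    set L : T →L[ℂ] ℂ := μ.comp (ContinuousLinearMap.mul ℂ T (P.ι a b)) with hL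
    have hLspan : ∀ t ∈ (Submodule.span ℂ
        (Set.range fun p : A × B => P.ι p.1 p.2) : Set T), L t = 0 := by
      intro t ht
      induction ht using Submodule.span_induction with
      | mem x hx =>
        obtain ⟨⟨c, d⟩, rfl⟩ := hx
        show μ (P.ι a b * P.ι c d) = 0
        rw [P.ι_mul, hμ', hfprod, zero_mul]
      | zero => simp
      | add x y _ _ hx hy => rw [map_add, hx, hy, add_zero]
      | smul c x _ hx => rw [map_smul, hx, smul_zero]
    have : ⇑L = fun _ => (0 : ℂ) :=
      Continuous.ext_on P.dense_span L.continuous continuous_const hLspan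
    intro t
    exact congrFun this t
  have hzero : ∀ s t : T, μ (s * t) = 0 := by
    intro s t
    set L : T →L[ℂ] ℂ := μ.comp ((ContinuousLinearMap.mul ℂ T).flip t) with hL
    have hLspan : ∀ s ∈ (Submodule.span ℂ
        (Set.range fun p : A × B => P.ι p.1 p.2) : Set T), L s = 0 := by
      intro s hs
      induction hs using Submodule.span_induction with
      | mem x hx =>
        obtain ⟨⟨c, d⟩, rfl⟩ := hx
        exact hstep1 c d t
      | zero => simp
      | add x y _ _ hx hy => rw [map_add, hx, hy, add_zero]
      | smul c x _ hx => rw [map_smul, hx, smul_zero]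
    have : ⇑L = fun _ => (0 : ℂ) :=
      Continuous.ext_on P.dense_span L.continuous continuous_const hLspan
    exact congrFun this s
  -- the derivation `D t = μ t • μ`
  set D : T →L[ℂ] (T →L[ℂ] ℂ) := μ.smulRight μ with hD
  have hder : ∀ a b x : T, D (a * b) x = D b (x * a) + D a (b * x) := by
    intro a b x
    simp [hD, hzero]
  obtain ⟨F, hF⟩ := hT D hder
  have hcontr := hF (P.ι a₀ (j a₀)) (P.ι a₀ (j a₀))
  rw [sub_self] at hcontr
  have hDval : D (P.ι a₀ (j a₀)) (P.ι a₀ (j a₀))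
      = (f a₀ * g (j a₀)) * (f a₀ * g (j a₀)) := by
    simp [hD, hμ']
  rw [hDval] at hcontr
  have hgb : g (j a₀) ≠ 0 := by
    rw [hg]
    simpa using hb₀ne
  exact (mul_ne_zero (mul_ne_zero hfa₀ hgb) (mul_ne_zero hfa₀ hgb)) hcontr
end

section
/- Let B be a Banach algebra, A a closed subalgebra, λ̃ ∈ B* a continuous linear functional vanishing on the linear span of {ab : a, b ∈ A}. Then the bounded linear map D : A ⊗̂ B → (A ⊗̂ B)* determined by D(a ⊗ b) = λ̃(a)λ̃(b)·(λ̃ ⊗ λ̃), where (λ̃ ⊗ λ̃)(c ⊗ d) = λ̃(c)λ̃(d), is a continuous derivation into the dual bimodule, and moreover x·D(y) = 0 and D(x)·y = 0 for all x, y ∈ A ⊗̂ B. -/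
open Filter Topology MulOpposite

/-- if `λ̃ ∈ B*` vanishes on products of elements of the closed
subalgebra `A` of `B`, then the bounded linear map `D : A ⊗̂ B → (A ⊗̂ B)*` determined
by `D(a⊗b) = λ̃(a)λ̃(b)(λ̃⊗λ̃)` is a continuous derivation into the dual bimodule, and
moreover `x·D(y) = 0` and `D(x)·y = 0` for all `x, y`. -/
theorem stmt11 {A B T : Type*} [NonUnitalNormedRing A] [NormedSpace ℂ A] [IsScalarTower ℂ A A] [SMulCommClass ℂ A A] [CompleteSpace A] [NonUnitalNormedRing B] [NormedSpace ℂ B] [IsScalarTower ℂ B B] [SMulCommClass ℂ B B] [CompleteSpace B] [NonUnitalNormedRing T] [NormedSpace ℂ T] [IsScalarTower ℂ T T] [SMulCommClass ℂ T T] [CompleteSpace T]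
    (j : A →L[ℂ] B) (hj_iso : ∀ a : A, ‖j a‖ = ‖a‖)
    (hj_mul : ∀ a b : A, j (a * b) = j a * j b)
    (lam : B →L[ℂ] ℂ) (hlam : ∀ a b : A, lam (j a * j b) = 0)
    (P : IsProjTensorProduct A B T)
    (D : T →L[ℂ] (T →L[ℂ] ℂ))
    (hD : ∀ (a c : A) (b d : B),
      D (P.ι a b) (P.ι c d) = lam (j a) * lam b * (lam (j c) * lam d)) :
    (∀ u v x : T, D (u * v) x = D v (x * u) + D u (v * x)) ∧
    (∀ u v x : T, D v (x * u) = 0) ∧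
    (∀ u v x : T, D u (v * x) = 0) := by

  -- A continuous linear functional vanishing on elementary tensors vanishes on T.
  have ext0 : ∀ f : T →L[ℂ] ℂ, (∀ a b, f (P.ι a b) = 0) → ∀ u : T, f u = 0 := by
    intro f hf u
    have hs : ∀ w ∈ (Submodule.span ℂ (Set.range fun p : A × B => P.ι p.1 p.2) : Set T),
        f w = 0 := by
      intro w hw
      induction hw using Submodule.span_induction with
      | mem x hx => obtain ⟨p, rfl⟩ := hx; exact hf p.1 p.2
      | zero => simp
      | add x y _ _ hx hy => simp [hx, hy]
      | smul c x _ hx => simp [hx]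
    have hcl : IsClosed {u : T | f u = 0} := isClosed_eq f.continuous continuous_const
    have hsub := closure_minimal hs hcl
    rw [P.dense_span.closure_eq] at hsub
    exact hsub (Set.mem_univ u)
  -- D u (v * x) = 0 for all u v x
  have h1 : ∀ (a a' a'' : A) (b b' b'' : B),
      D (P.ι a b) (P.ι a' b' * P.ι a'' b'') = 0 := by
    intro a a' a'' b b' b''
    rw [P.ι_mul, hD, hj_mul, hlam]
    ring
  have h2 : ∀ (u : T) (a' a'' : A) (b' b'' : B),
      D u (P.ι a' b' * P.ι a'' b'') = 0 := by
    intro u a' a'' b' b''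
    exact ext0 ((ContinuousLinearMap.apply ℂ ℂ (P.ι a' b' * P.ι a'' b'')).comp D)
      (fun a b => h1 a a' a'' b b' b'') u
  have h3 : ∀ (u : T) (a' : A) (b' : B) (x : T), D u (P.ι a' b' * x) = 0 := by
    intro u a' b' x
    exact ext0 ((D u).comp ((ContinuousLinearMap.mul ℂ T) (P.ι a' b')))
      (fun a b => h2 u a' a b' b) x
  have h4 : ∀ u v x : T, D u (v * x) = 0 := by
    intro u v x
    exact ext0 ((D u).comp ((ContinuousLinearMap.mul ℂ T).flip x))
      (fun a b => h3 u a b x) v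
  -- D (u * v) x = 0 for all u v x
  have g1 : ∀ (a a' a'' : A) (b b' b'' : B),
      D (P.ι a b * P.ι a' b') (P.ι a'' b'') = 0 := by
    intro a a' a'' b b' b''
    rw [P.ι_mul, hD, hj_mul, hlam]
    ring
  have g2 : ∀ (a a' : A) (b b' : B) (x : T), D (P.ι a b * P.ι a' b') x = 0 := by
    intro a a' b b' x
    exact ext0 (D (P.ι a b * P.ι a' b')) (fun c d => g1 a a' c b b' d) x
  have g3 : ∀ (a : A) (b : B) (v x : T), D (P.ι a b * v) x = 0 := by
    intro a b v x
    exact ext0 ((ContinuousLinearMap.apply ℂ ℂ x).comp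
      (D.comp ((ContinuousLinearMap.mul ℂ T) (P.ι a b))))
      (fun c d => g2 a c b d x) v
  have g4 : ∀ u v x : T, D (u * v) x = 0 := by
    intro u v x
    exact ext0 ((ContinuousLinearMap.apply ℂ ℂ x).comp
      (D.comp ((ContinuousLinearMap.mul ℂ T).flip v)))
      (fun a b => g3 a b v x) u
  refine ⟨fun u v x => ?_, fun u v x => h4 v x u, fun u v x => h4 u v x⟩
  rw [g4, h4 v x u, h4 u v x]
  ring
end

section
/- Let B be a commutative Banach algebra and A a closed ideal in B such that A ⊗̂ B is weakly amenable. Then A is weakly amenable. -/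
open Filter Topology MulOpposite

set_option maxHeartbeats 1000000 in
/-- if `A` is a closed ideal in a commutative Banach algebra `B`
(encoded by an isometric multiplicative embedding `j : A → B` whose range is an
ideal) and `A ⊗̂ B` is weakly amenable, then `A` is weakly amenable. -/
theorem stmt12 {A B T : Type*} [NonUnitalNormedRing A] [NormedSpace ℂ A] [IsScalarTower ℂ A A] [SMulCommClass ℂ A A] [CompleteSpace A] [NonUnitalNormedRing B] [NormedSpace ℂ B] [IsScalarTower ℂ B B] [SMulCommClass ℂ B B] [CompleteSpace B] [NonUnitalNormedRing T] [NormedSpace ℂ T] [IsScalarTower ℂ T T] [SMulCommClass ℂ T T] [CompleteSpace T]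
    (hBcomm : ∀ x y : B, x * y = y * x)
    (j : A →L[ℂ] B) (hj_iso : ∀ a : A, ‖j a‖ = ‖a‖)
    (hj_mul : ∀ a b : A, j (a * b) = j a * j b)
    (hj_ideal : ∀ (b : B) (a : A), b * j a ∈ Set.range j)
    (P : IsProjTensorProduct A B T) (hT : WeaklyAmenable T) :
    WeaklyAmenable A := by
  -- j is injective
  have jinj : Function.Injective j := by
    intro a b h
    have h0 : ‖a - b‖ = 0 := by rw [← hj_iso]; simp [map_sub, h]
    have := norm_eq_zero.mp h0
    exact sub_eq_zero.mp this
  -- the action of B on A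
  have hid : ∀ (b : B) (a : A), ∃ c : A, j c = b * j a := fun b a => hj_ideal b a
  choose act hact using hid
  have hactnorm : ∀ (b : B) (a : A), ‖act b a‖ ≤ ‖b‖ * ‖a‖ := by
    intro b a
    calc ‖act b a‖ = ‖b * j a‖ := by rw [← hj_iso (act b a), hact]
    _ ≤ ‖b‖ * ‖j a‖ := norm_mul_le _ _
    _ = ‖b‖ * ‖a‖ := by rw [hj_iso]
  let ActL : B →ₗ[ℂ] A →ₗ[ℂ] A := LinearMap.mk₂ ℂ act
    (fun b b' a => jinj (by simp [hact, add_mul]))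
    (fun c b a => jinj (by simp [hact, smul_mul_assoc]))
    (fun b a a' => jinj (by simp [hact, mul_add]))
    (fun c b a => jinj (by simp [hact, mul_smul_comm]))
  let Act : B →L[ℂ] A →L[ℂ] A := LinearMap.mkContinuous₂ ActL 1
    (fun b a => by rw [one_mul]; exact hactnorm b a)
  have jAct : ∀ (b : B) (a : A), j (Act b a) = b * j a := fun b a => hact b a
  have hActnorm : ∀ (b : B) (a : A), ‖Act b a‖ ≤ ‖b‖ * ‖a‖ := fun b a => hactnorm b a
  -- basic algebra
  have Acomm : ∀ a c : A, a * c = c * a := fun a c =>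
    jinj (by rw [hj_mul, hj_mul, hBcomm])
  have hAct_j : ∀ (a x : A), Act (j a) x = a * x := fun a x =>
    jinj (by rw [jAct, ← hj_mul])
  have hAct_mul : ∀ (b d : B) (a c : A), Act (b * d) (a * c) = Act b a * Act d c := by
    intro b d a c
    apply jinj
    rw [jAct, hj_mul, hj_mul, jAct, jAct]
    rw [mul_assoc, mul_assoc]
    congr 1
    rw [← mul_assoc, ← mul_assoc, hBcomm d (j a)]
  clear_value Act ActL
  -- extensionality from density of the span of elementary tensors
  have extC : ∀ (f g : T →L[ℂ] ℂ), (∀ (a : A) (b : B), f (P.ι a b) = g (P.ι a b)) → f = g := by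
    intro f g h
    apply ContinuousLinearMap.ext_on P.dense_span
    rintro z ⟨p, rfl⟩
    exact h p.1 p.2
  -- T is commutative
  have Tcomm1 : ∀ (a : A) (b : B) (u : T), P.ι a b * u = u * P.ι a b := by
    intro a b
    have h : ContinuousLinearMap.mul ℂ T (P.ι a b)
        = (ContinuousLinearMap.mul ℂ T).flip (P.ι a b) := by
      apply ContinuousLinearMap.ext_on P.dense_span
      rintro z ⟨p, rfl⟩
      simp only [ContinuousLinearMap.mul_apply', ContinuousLinearMap.flip_apply]
      rw [P.ι_mul, P.ι_mul, Acomm, hBcomm]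
    intro u
    simpa using DFunLike.congr_fun h u
  have Tcomm : ∀ t u : T, t * u = u * t := by
    intro t u
    have h : (ContinuousLinearMap.mul ℂ T).flip u = ContinuousLinearMap.mul ℂ T u := by
      apply ContinuousLinearMap.ext_on P.dense_span
      rintro z ⟨p, rfl⟩
      simpa using Tcomm1 p.1 p.2 u
    simpa using DFunLike.congr_fun h t
  -- main goal
  intro D hD
  suffices hzero : ∀ a x : A, D a x = 0 by
    exact ⟨0, fun a x => by simp [hzero]⟩
  -- the functionals m x y : T* with m x y (ι a b) = D (Act b a) (Act y x)
  have hm : ∀ (x : A) (y : B), ∃ m : T →L[ℂ] ℂ,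
      (∀ (a : A) (b : B), m (P.ι a b) = D (Act b a) (Act y x)) ∧
      ‖m‖ ≤ ‖D‖ * (‖x‖ * ‖y‖) := by
    intro x y
    have hφb : ∀ (a : A) (b : B),
        ‖D (Act b a) (Act y x)‖ ≤ (‖D‖ * (‖x‖ * ‖y‖)) * ‖a‖ * ‖b‖ := by
      intro a b
      calc ‖D (Act b a) (Act y x)‖ ≤ ‖D‖ * ‖Act b a‖ * ‖Act y x‖ := D.le_opNorm₂ _ _
      _ ≤ ‖D‖ * (‖b‖ * ‖a‖) * (‖y‖ * ‖x‖) := by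
          apply mul_le_mul _ (hActnorm y x) (norm_nonneg _) (by positivity)
          exact mul_le_mul_of_nonneg_left (hActnorm b a) (norm_nonneg D)
      _ = (‖D‖ * (‖x‖ * ‖y‖)) * ‖a‖ * ‖b‖ := by ring
    let φ : A →ₗ[ℂ] B →ₗ[ℂ] ℂ := LinearMap.mk₂ ℂ (fun a b => D (Act b a) (Act y x))
      (fun a a' b => by simp)
      (fun c a b => by simp)
      (fun a b b' => by simp [map_add, ContinuousLinearMap.add_apply])
      (fun c a b => by simp [map_smul, ContinuousLinearMap.smul_apply])
    obtain ⟨m, hm1, hm2⟩ := P.lift ℂ inferInstance inferInstance inferInstance (LinearMap.mkContinuous₂ φ _ hφb)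
    refine ⟨m, fun a b => by exact hm1 a b, le_trans hm2 ?_⟩
    exact LinearMap.mkContinuous₂_norm_le _ (by positivity) _
  choose m hm1 hm2 using hm
  -- bilinearity of m in (x, y)
  have m_addx : ∀ (x x' : A) (y : B), m (x + x') y = m x y + m x' y := by
    intro x x' y
    apply extC
    intro a b
    simp [hm1, map_add, ContinuousLinearMap.add_apply]
  have m_smulx : ∀ (c : ℂ) (x : A) (y : B), m (c • x) y = c • m x y := by
    intro c x y
    apply extC
    intro a b
    simp [hm1, map_smul, ContinuousLinearMap.smul_apply]
  have m_addy : ∀ (x : A) (y y' : B), m x (y + y') = m x y + m x y' := by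
    intro x y y'
    apply extC
    intro a b
    simp [hm1, map_add, ContinuousLinearMap.add_apply]
  have m_smuly : ∀ (c : ℂ) (x : A) (y : B), m x (c • y) = c • m x y := by
    intro c x y
    apply extC
    intro a b
    simp [hm1, map_smul, ContinuousLinearMap.smul_apply]
  -- the transferred map Dh t
  have hDh : ∀ t : T, ∃ dt : T →L[ℂ] ℂ,
      (∀ (x : A) (y : B), dt (P.ι x y) = m x y t) ∧ ‖dt‖ ≤ (‖D‖ * ‖t‖) := by
    intro t
    have bound : ∀ (x : A) (y : B), ‖m x y t‖ ≤ (‖D‖ * ‖t‖) * ‖x‖ * ‖y‖ := by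
      intro x y
      calc ‖m x y t‖ ≤ ‖m x y‖ * ‖t‖ := (m x y).le_opNorm t
      _ ≤ (‖D‖ * (‖x‖ * ‖y‖)) * ‖t‖ :=
          mul_le_mul_of_nonneg_right (hm2 x y) (norm_nonneg t)
      _ = (‖D‖ * ‖t‖) * ‖x‖ * ‖y‖ := by ring
    let ψ : A →ₗ[ℂ] B →ₗ[ℂ] ℂ := LinearMap.mk₂ ℂ (fun x y => m x y t)
      (fun x x' y => by show m (x + x') y t = m x y t + m x' y t; rw [m_addx]; simp)
      (fun c x y => by show m (c • x) y t = c • m x y t; rw [m_smulx]; simp)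
      (fun x y y' => by show m x (y + y') t = m x y t + m x y' t; rw [m_addy]; simp)
      (fun c x y => by show m x (c • y) t = c • m x y t; rw [m_smuly]; simp)
    obtain ⟨dt, h1, h2⟩ := P.lift ℂ inferInstance inferInstance inferInstance (LinearMap.mkContinuous₂ ψ _ bound)
    refine ⟨dt, fun x y => by exact h1 x y, le_trans h2 ?_⟩
    exact LinearMap.mkContinuous₂_norm_le _ (by positivity) _
  choose Dh hDh1 hDh2 using hDh
  have Dh_add : ∀ t t' : T, Dh (t + t') = Dh t + Dh t' := by
    intro t t'
    apply extC
    intro x y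
    simp [hDh1, map_add, ContinuousLinearMap.add_apply]
  have Dh_smul : ∀ (c : ℂ) (t : T), Dh (c • t) = c • Dh t := by
    intro c t
    apply extC
    intro x y
    simp [hDh1, map_smul, ContinuousLinearMap.smul_apply]
  let Dhat : T →L[ℂ] T →L[ℂ] ℂ := LinearMap.mkContinuous
    { toFun := Dh, map_add' := Dh_add, map_smul' := Dh_smul } ‖D‖
    (fun t => by simpa [mul_comm] using hDh2 t)
  have Dhat_apply : ∀ (a : A) (b : B) (x : A) (y : B),
      Dhat (P.ι a b) (P.ι x y) = D (Act b a) (Act y x) := by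
    intro a b x y
    show Dh (P.ι a b) (P.ι x y) = _
    rw [hDh1, hm1]
  clear_value Dhat
  -- derivation identity for Dhat, on elementary tensors
  have elem : ∀ (a : A) (b : B) (c : A) (d : B) (x : A) (y : B),
      Dhat (P.ι a b * P.ι c d) (P.ι x y)
      = Dhat (P.ι c d) (P.ι x y * P.ι a b) + Dhat (P.ι a b) (P.ι c d * P.ι x y) := by
    intro a b c d x y
    rw [P.ι_mul, P.ι_mul, P.ι_mul, Dhat_apply, Dhat_apply, Dhat_apply]
    rw [hAct_mul b d a c, hD (Act b a) (Act d c) (Act y x)]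
    rw [hAct_mul y b x a, hAct_mul d y c x]
  -- extend to all of T in three steps
  have layer1 : ∀ (a : A) (b : B) (c : A) (d : B) (v : T),
      Dhat (P.ι a b * P.ι c d) v
      = Dhat (P.ι c d) (v * P.ι a b) + Dhat (P.ι a b) (P.ι c d * v) := by
    intro a b c d
    have h : Dhat (P.ι a b * P.ι c d)
        = (Dhat (P.ι c d)).comp ((ContinuousLinearMap.mul ℂ T).flip (P.ι a b))
          + (Dhat (P.ι a b)).comp (ContinuousLinearMap.mul ℂ T (P.ι c d)) := by
      apply extC
      intro x y
      simpa [ContinuousLinearMap.mul_apply'] using elem a b c d x y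
    intro v
    simpa [ContinuousLinearMap.mul_apply'] using DFunLike.congr_fun h v
  have layer2 : ∀ (a : A) (b : B) (u v : T),
      Dhat (P.ι a b * u) v
      = Dhat u (v * P.ι a b) + Dhat (P.ι a b) (u * v) := by
    intro a b u v
    have h : (Dhat.flip v).comp (ContinuousLinearMap.mul ℂ T (P.ι a b))
        = Dhat.flip (v * P.ι a b)
          + (Dhat (P.ι a b)).comp ((ContinuousLinearMap.mul ℂ T).flip v) := by
      apply extC
      intro c d
      simpa [ContinuousLinearMap.mul_apply'] using layer1 a b c d v
    simpa [ContinuousLinearMap.mul_apply'] using DFunLike.congr_fun h u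
  have layer3 : ∀ t u v : T,
      Dhat (t * u) v = Dhat u (v * t) + Dhat t (u * v) := by
    intro t u v
    have h : (Dhat.flip v).comp ((ContinuousLinearMap.mul ℂ T).flip u)
        = (Dhat u).comp (ContinuousLinearMap.mul ℂ T v) + Dhat.flip (u * v) := by
      apply extC
      intro a b
      simpa [ContinuousLinearMap.mul_apply'] using layer2 a b u v
    simpa [ContinuousLinearMap.mul_apply'] using DFunLike.congr_fun h t
  obtain ⟨g, hg⟩ := hT Dhat layer3
  have hvan : ∀ (a : A) (b : B) (x : A) (y : B), D (Act b a) (Act y x) = 0 := by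
    intro a b x y
    rw [← Dhat_apply, hg, Tcomm, sub_self]
  -- every functional vanishing on the range of Act vanishes identically
  have hmu : ∀ μ : A →L[ℂ] ℂ, (∀ (a : A) (b : B), μ (Act b a) = 0) → ∀ a : A, μ a = 0 := by
    intro μ hvμ a
    by_contra hne
    have hBzero : ∀ (β : B →L[ℂ] ℂ) (b : B), μ a * β b = 0 := by
      intro β b
      obtain ⟨l, hl1, _⟩ := P.lift ℂ inferInstance inferInstance inferInstance (μ.smulRight β)
      have hprod1 : ∀ (c : A) (e : B) (t : T), l (P.ι c e * t) = 0 := by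
        intro c e
        have h : l.comp (ContinuousLinearMap.mul ℂ T (P.ι c e)) = 0 := by
          apply extC
          intro x y
          have hcx : μ (c * x) = 0 := by rw [← hAct_j c x]; exact hvμ x (j c)
          simp [ContinuousLinearMap.mul_apply', P.ι_mul, hl1, hcx]
        intro t
        simpa [ContinuousLinearMap.mul_apply'] using DFunLike.congr_fun h t
      have hprod : ∀ s t : T, l (s * t) = 0 := by
        intro s t
        have h : l.comp ((ContinuousLinearMap.mul ℂ T).flip t) = 0 := by
          apply extC
          intro x y
          simpa [ContinuousLinearMap.mul_apply'] using hprod1 x y t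
        simpa [ContinuousLinearMap.mul_apply'] using DFunLike.congr_fun h s
      obtain ⟨g2, hg2⟩ := hT (l.smulRight l) (by
        intro s t u
        simp [ContinuousLinearMap.smulRight_apply, ContinuousLinearMap.smul_apply, hprod])
      have hl0 : ∀ t : T, l t = 0 := by
        intro t
        have h := hg2 t t
        simp only [ContinuousLinearMap.smulRight_apply, smul_eq_mul, sub_self] at h
        exact mul_self_eq_zero.mp h
      have := hl0 (P.ι a b)
      rw [hl1] at this
      simpa [smul_eq_mul] using this
    have hb0 : ∀ b : B, b = 0 := by
      intro b
      apply NormedSpace.eq_zero_of_forall_dual_eq_zero ℂ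
      intro β
      rcases mul_eq_zero.mp (hBzero β b) with h | h
      · exact absurd h hne
      · exact h
    have ha0 : a = 0 := by
      have : ‖a‖ = 0 := by rw [← hj_iso a, hb0 (j a), norm_zero]
      exact norm_eq_zero.mp this
    exact hne (by rw [ha0, map_zero])
  -- conclude D = 0
  have step1 : ∀ (c : A) (e : B) (z : A), D (Act e c) z = 0 := by
    intro c e z
    exact hmu (D (Act e c)) (fun x y => hvan c e x y) z
  intro a x
  exact hmu (D.flip x) (fun c e => step1 c e x) a
end

section
/- Let A be a Banach algebra with bounded approximate identity (e_i), let X be a neo-unital Banach A ⊗̂ A^{op}-bimodule with action •, equipped with the transferred A ⊗̂ A-bimodule action ∘ given by (a⊗b)∘x = lim_i (a⊗e_i)•x•(e_i⊗b) and x∘(a⊗b) = lim_i (e_i⊗b)•x•(a⊗e_i). If Y is a closed A ⊗̂ A^{op}-submodule of X and f ∈ Y* satisfies u•f = f•u for all u ∈ A ⊗̂ A^{op}, then f also satisfies u∘f = f∘u for all u ∈ A ⊗̂ A, where the dual actions are the canonical ones. -/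
open Filter Topology MulOpposite

set_option maxHeartbeats 1000000

/-- let `X` be a neo-unital Banach `A ⊗̂ Aᵒᵖ`-bimodule (`σ`), with the
transferred `A ⊗̂ A`-action `τ` given by the limit formulas along a bounded
approximate identity `(e_i)`. If `Y ⊆ X` is a closed `σ`-submodule and `f ∈ Y*`
commutes with all `σ`-actions (`u•f = f•u`), then `Y` is `τ`-invariant and `f`
commutes with all `τ`-actions (`u∘f = f∘u`). -/
theorem stmt17 {A T T' X : Type*} [NonUnitalNormedRing A] [NormedSpace ℂ A] [IsScalarTower ℂ A A] [SMulCommClass ℂ A A] [CompleteSpace A] [NonUnitalNormedRing T] [NormedSpace ℂ T] [IsScalarTower ℂ T T] [SMulCommClass ℂ T T] [CompleteSpace T] [NonUnitalNormedRing T'] [NormedSpace ℂ T'] [IsScalarTower ℂ T' T'] [SMulCommClass ℂ T' T'] [CompleteSpace T']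
    [NormedAddCommGroup X] [NormedSpace ℂ X] [CompleteSpace X]
    (P : IsProjTensorProduct A Aᵐᵒᵖ T) (Q : IsProjTensorProduct A A T')
    (S : BddNet A) (hS : IsBAI S)
    (σ : BanachBimodule T X)
    (hneo : ∀ x : X, ∃ (u v : T) (y : X), x = σ.L u (σ.R v y))
    (τ : BanachBimodule T' X)
    (hτ : ∀ (a b : A) (x : X),
      Filter.Tendsto
        (fun i => σ.L (P.ι a (MulOpposite.op (S.z i))) (σ.R (P.ι (S.z i) (MulOpposite.op b)) x))
        S.filter (nhds (τ.L (Q.ι a b) x)) ∧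
      Filter.Tendsto
        (fun i => σ.L (P.ι (S.z i) (MulOpposite.op b)) (σ.R (P.ι a (MulOpposite.op (S.z i))) x))
        S.filter (nhds (τ.R (Q.ι a b) x)))
    (Y : Submodule ℂ X) (hYclosed : IsClosed (Y : Set X))
    (hYinv : ∀ (u : T) (y : X), y ∈ Y → σ.L u y ∈ Y ∧ σ.R u y ∈ Y)
    (f : Y →L[ℂ] ℂ)
    (hf : ∀ (u : T) (y : Y),
      f ⟨σ.R u (y : X), (hYinv u y y.2).2⟩ = f ⟨σ.L u (y : X), (hYinv u y y.2).1⟩) :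
    ∀ (u' : T') (y : Y), ∃ (h1 : τ.R u' (y : X) ∈ Y) (h2 : τ.L u' (y : X) ∈ Y),
      f ⟨τ.R u' (y : X), h1⟩ = f ⟨τ.L u' (y : X), h2⟩ := by
  
  obtain ⟨F, hFf, -⟩ := exists_extension_norm_eq Y f
  haveI hNB : S.filter.NeBot := by
    letI := S.dir; letI := S.ne
    exact Filter.atTop_neBot
  -- f (as F) intertwines left and right σ-actions on Y
  have hF : ∀ (u : T) (z : X), z ∈ Y → F (σ.L u z) = F (σ.R u z) := by
    intro u z hz
    calc F (σ.L u z) = f ⟨σ.L u z, (hYinv u z hz).1⟩ := hFf ⟨σ.L u z, (hYinv u z hz).1⟩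
      _ = f ⟨σ.R u z, (hYinv u z hz).2⟩ := (hf u ⟨z, hz⟩).symm
      _ = F (σ.R u z) := (hFf ⟨σ.R u z, (hYinv u z hz).2⟩).symm
  -- convergence helper
  have htend : ∀ (x : X) (a b : A) (ca cb : S.ι → A),
      Filter.Tendsto ca S.filter (nhds a) → Filter.Tendsto cb S.filter (nhds b) →
      Filter.Tendsto (fun i => F (σ.R (P.ι (ca i) (op (cb i))) x)) S.filter
        (nhds (F (σ.R (P.ι a (op b)) x))) := by
    intro x a b ca cb ha hb
    have c : Continuous fun p : A × A => F (σ.R (P.ι p.1 (op p.2)) x) :=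
      F.continuous.comp ((σ.R.flip x).continuous.comp
        (P.ι.continuous₂.comp (continuous_fst.prodMk
          (MulOpposite.continuous_op.comp continuous_snd))))
    have hp : Filter.Tendsto (fun i => (ca i, cb i)) S.filter (nhds (a, b)) :=
      ha.prodMk_nhds hb
    simpa [Function.comp_def] using (c.tendsto (a, b)).comp hp
  -- F-values on elementary tensors
  have mainL : ∀ (a b : A) (y : Y),
      F (τ.L (Q.ι a b) (y : X)) = F (σ.R (P.ι a (op b)) (y : X)) := by
    intro a b y
    have h1 : Filter.Tendsto
        (fun i => F (σ.L (P.ι a (op (S.z i))) (σ.R (P.ι (S.z i) (op b)) (y : X))))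
        S.filter (nhds (F (τ.L (Q.ι a b) (y : X)))) :=
      (F.continuous.tendsto _).comp (hτ a b y).1
    have h2 : ∀ i, F (σ.L (P.ι a (op (S.z i))) (σ.R (P.ι (S.z i) (op b)) (y : X)))
        = F (σ.R (P.ι (S.z i * a) (op (S.z i * b))) (y : X)) := by
      intro i
      rw [hF _ _ ((hYinv _ _ y.2).2)]
      have e : σ.R (P.ι a (op (S.z i))) (σ.R (P.ι (S.z i) (op b)) (y : X))
          = σ.R (P.ι (S.z i) (op b) * P.ι a (op (S.z i))) (y : X) := by
        rw [σ.R_mul]; rfl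
      rw [e, P.ι_mul, ← op_mul]
    exact tendsto_nhds_unique (h1.congr h2) (htend _ a b _ _ (hS a).2 (hS b).2)
  have mainR : ∀ (a b : A) (y : Y),
      F (τ.R (Q.ι a b) (y : X)) = F (σ.R (P.ι a (op b)) (y : X)) := by
    intro a b y
    have h1 : Filter.Tendsto
        (fun i => F (σ.L (P.ι (S.z i) (op b)) (σ.R (P.ι a (op (S.z i))) (y : X))))
        S.filter (nhds (F (τ.R (Q.ι a b) (y : X)))) :=
      (F.continuous.tendsto _).comp (hτ a b y).2
    have h2 : ∀ i, F (σ.L (P.ι (S.z i) (op b)) (σ.R (P.ι a (op (S.z i))) (y : X)))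
        = F (σ.R (P.ι (a * S.z i) (op (b * S.z i))) (y : X)) := by
      intro i
      rw [hF _ _ ((hYinv _ _ y.2).2)]
      have e : σ.R (P.ι (S.z i) (op b)) (σ.R (P.ι a (op (S.z i))) (y : X))
          = σ.R (P.ι a (op (S.z i)) * P.ι (S.z i) (op b)) (y : X) := by
        rw [σ.R_mul]; rfl
      rw [e, P.ι_mul, ← op_mul]
    exact tendsto_nhds_unique (h1.congr h2) (htend _ a b _ _ (hS a).1 (hS b).1)
  -- Y is τ-invariant on elementary tensors
  have memL : ∀ (a b : A) (y : Y), τ.L (Q.ι a b) (y : X) ∈ Y := fun a b y =>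
    hYclosed.mem_of_tendsto (hτ a b (y : X)).1
      (Filter.Eventually.of_forall fun i => (hYinv _ _ ((hYinv _ _ y.2).2)).1)
  have memR : ∀ (a b : A) (y : Y), τ.R (Q.ι a b) (y : X) ∈ Y := fun a b y =>
    hYclosed.mem_of_tendsto (hτ a b (y : X)).2
      (Filter.Eventually.of_forall fun i => (hYinv _ _ ((hYinv _ _ y.2).2)).1)
  -- density principle
  have key : ∀ (K : Submodule ℂ T'), IsClosed (K : Set T') →
      (∀ a b : A, Q.ι a b ∈ K) → ∀ u' : T', u' ∈ K := by
    intro K hK hmem u'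
    have h1 : (Submodule.span ℂ (Set.range fun p : A × A => Q.ι p.1 p.2) : Set T')
        ⊆ (K : Set T') :=
      Submodule.span_le.mpr (by rintro _ ⟨p, rfl⟩; exact hmem p.1 p.2)
    exact closure_minimal h1 hK (Q.dense_span u')
  intro u' y
  have h1 : τ.R u' (y : X) ∈ Y := by
    refine key (Submodule.comap ((τ.R.flip (y : X)) : T' →ₗ[ℂ] X) Y) ?_ (fun a b => memR a b y) u'
    exact hYclosed.preimage (τ.R.flip (y : X)).continuous
  have h2 : τ.L u' (y : X) ∈ Y := by
    refine key (Submodule.comap ((τ.L.flip (y : X)) : T' →ₗ[ℂ] X) Y) ?_ (fun a b => memL a b y) u'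
    exact hYclosed.preimage (τ.L.flip (y : X)).continuous
  refine ⟨h1, h2, ?_⟩
  set g : T' →L[ℂ] ℂ := F.comp (τ.R.flip (y : X)) - F.comp (τ.L.flip (y : X)) with hg
  have hgker : u' ∈ g.ker := by
    refine key g.ker (ContinuousLinearMap.isClosed_ker g) ?_ u'
    intro a b
    show g (Q.ι a b) = 0
    have : F (τ.R (Q.ι a b) (y : X)) - F (τ.L (Q.ι a b) (y : X)) = 0 := by
      rw [mainL a b y, mainR a b y, sub_self]
    simpa [hg] using this
  have e : F (τ.R u' (y : X)) = F (τ.L u' (y : X)) := by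
    have := LinearMap.mem_ker.mp hgker
    simp only [hg, ContinuousLinearMap.sub_apply, ContinuousLinearMap.comp_apply,
      ContinuousLinearMap.flip_apply] at this
    exact sub_eq_zero.mp this
  calc f ⟨τ.R u' (y : X), h1⟩ = F (τ.R u' (y : X)) := (hFf ⟨τ.R u' (y : X), h1⟩).symm
    _ = F (τ.L u' (y : X)) := e
    _ = f ⟨τ.L u' (y : X), h2⟩ := hFf ⟨τ.L u' (y : X), h2⟩
end
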